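/- arXiv:1202.5947 — 4 statements merged into one kernel-verified Lean document; each statement's English description precedes it below -/
import Mathlib

section
/- Let P ⊆ ℝ^n be a rational polyhedron and η : P → ℝ^m a Z-map. Then the image η(P) is a rational polyhedron in ℝ^m. -/
open scoped BigOperators

noncomputable section

/-- `x ∈ ℝ^n` is a rational point: all its coordinates are rational. -/
def IsRationalPoint {n : ℕ} (x : Fin n → ℝ) : Prop := ∀ i, ∃ q : ℚ, x i = (q : ℝ)

/-- `den x` : the least common denominator of the coordinates of a rational point `x`. -/
noncomputable def den {n : ℕ} (x : Fin n → ℝ) : ℕ :=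
  sInf {d : ℕ | 0 < d ∧ ∀ i, ∃ z : ℤ, (d : ℝ) * x i = (z : ℝ)}

/-- The homogeneous correspondent `ṽ = den(v)·(v,1) ∈ ℤ^{n+1}` of a rational point,
viewed as a real vector (its entries are integers when `v` is rational). -/
noncomputable def homCorr {n : ℕ} (x : Fin n → ℝ) : Fin (n + 1) → ℝ :=
  Fin.snoc (fun i => (den x : ℝ) * x i) (den x)

/-- The finite set `V` is the vertex set of a rational simplex. -/
def IsRationalSimplex {n : ℕ} (V : Finset (Fin n → ℝ)) : Prop :=
  (∀ v ∈ V, IsRationalPoint v) ∧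
    AffineIndependent ℝ (fun v : V => (v : Fin n → ℝ))

/-- The finite set `V` is the vertex set of a regular rational simplex: the homogeneous
correspondents of its vertices can be extended to a basis of the free abelian group `ℤ^{n+1}`. -/
def IsRegularSimplex {n : ℕ} (V : Finset (Fin n → ℝ)) : Prop :=
  IsRationalSimplex V ∧
    ∃ (b : Module.Basis (Fin (n + 1)) ℤ (Fin (n + 1) → ℤ)) (f : V → Fin (n + 1)),
      Function.Injective f ∧
        ∀ v : V, (fun i => ((b (f v) i : ℤ) : ℝ)) = homCorr (v : Fin n → ℝ)

/-- An indexed family of points is the vertex family of a regular rational simplex. -/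
def IsRegularFamily {n k : ℕ} (x : Fin k → (Fin n → ℝ)) : Prop :=
  (∀ i, IsRationalPoint (x i)) ∧ AffineIndependent ℝ x ∧
    ∃ (b : Module.Basis (Fin (n + 1)) ℤ (Fin (n + 1) → ℤ)) (f : Fin k → Fin (n + 1)),
      Function.Injective f ∧ ∀ i, (fun j => ((b (f i) j : ℤ) : ℝ)) = homCorr (x i)

/-- A (finite, geometric) simplicial complex, presented by the vertex sets of its simplexes. -/
def IsSimplicialComplex {n : ℕ} (K : Finset (Finset (Fin n → ℝ))) : Prop :=
  (∀ V ∈ K, V.Nonempty ∧ AffineIndependent ℝ (fun v : V => (v : Fin n → ℝ))) ∧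
  (∀ V ∈ K, ∀ W, W ⊆ V → W.Nonempty → W ∈ K) ∧
  (∀ V ∈ K, ∀ W ∈ K,
    convexHull ℝ (V : Set (Fin n → ℝ)) ∩ convexHull ℝ (W : Set (Fin n → ℝ)) =
      convexHull ℝ ((V : Set (Fin n → ℝ)) ∩ (W : Set (Fin n → ℝ))))

/-- The support of a simplicial complex: the union of its simplexes. -/
def complexSupport {n : ℕ} (K : Finset (Finset (Fin n → ℝ))) : Set (Fin n → ℝ) :=
  ⋃ V ∈ K, convexHull ℝ (V : Set (Fin n → ℝ))

/-- The set of vertices of a simplicial complex. -/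
def complexVerts {n : ℕ} (K : Finset (Finset (Fin n → ℝ))) : Set (Fin n → ℝ) :=
  ⋃ V ∈ K, (V : Set (Fin n → ℝ))

/-- `K` is a triangulation of `P`: a simplicial complex all of whose simplexes are rational,
with support `P`. -/
def IsTriangulation {n : ℕ} (K : Finset (Finset (Fin n → ℝ))) (P : Set (Fin n → ℝ)) : Prop :=
  IsSimplicialComplex K ∧ (∀ V ∈ K, IsRationalSimplex V) ∧ complexSupport K = P

/-- `K` is a regular triangulation of `P`: all its simplexes are regular. -/
def IsRegularTriangulation {n : ℕ} (K : Finset (Finset (Fin n → ℝ)))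
    (P : Set (Fin n → ℝ)) : Prop :=
  IsTriangulation K P ∧ ∀ V ∈ K, IsRegularSimplex V

/-- `K` is a subdivision of `Δ`: each simplex of `K` is contained in some simplex of `Δ`. -/
def IsSubdivision {n : ℕ} (K Δ : Finset (Finset (Fin n → ℝ))) : Prop :=
  ∀ V ∈ K, ∃ W ∈ Δ, convexHull ℝ (V : Set (Fin n → ℝ)) ⊆ convexHull ℝ (W : Set (Fin n → ℝ))

/-- `K` is a strongly regular triangulation of `P`: a regular triangulation all of whose
maximal simplexes have vertices whose denominators have greatest common divisor 1. -/
def IsStronglyRegularTriangulation {n : ℕ} (K : Finset (Finset (Fin n → ℝ)))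
    (P : Set (Fin n → ℝ)) : Prop :=
  IsRegularTriangulation K P ∧
    ∀ V ∈ K, (∀ W ∈ K, V ⊆ W → W = V) → Finset.gcd V den = 1

/-- `P ⊆ ℝ^n` is a rational polyhedron: a finite union of convex hulls of
finite sets of rational points. -/
def IsRationalPolyhedron {n : ℕ} (P : Set (Fin n → ℝ)) : Prop :=
  ∃ 𝒱 : Finset (Finset (Fin n → ℝ)),
    (∀ V ∈ 𝒱, ∀ v ∈ V, IsRationalPoint v) ∧
    P = ⋃ V ∈ 𝒱, convexHull ℝ (V : Set (Fin n → ℝ))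

/-- `η` is a Z-map on `P`: continuous on `P` and piecewise (affine with integer
coefficients), with finitely many pieces. -/
def IsZMap {n m : ℕ} (P : Set (Fin n → ℝ)) (η : (Fin n → ℝ) → (Fin m → ℝ)) : Prop :=
  ContinuousOn η P ∧
    ∃ L : List (Matrix (Fin m) (Fin n) ℤ × (Fin m → ℤ)),
      ∀ x ∈ P, ∃ l ∈ L, η x = fun i => (∑ j, (l.1 i j : ℝ) * x j) + (l.2 i : ℝ)

/-- A Z-map from `P` into `Q`. -/
def IsZMapTo {n m : ℕ} (P : Set (Fin n → ℝ)) (Q : Set (Fin m → ℝ))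
    (η : (Fin n → ℝ) → (Fin m → ℝ)) : Prop :=
  IsZMap P η ∧ Set.MapsTo η P Q

/-- `η` is a Z-homeomorphism of `P` onto `Q`: a bijective Z-map whose inverse is a Z-map. -/
def IsZHomeo {n m : ℕ} (P : Set (Fin n → ℝ)) (Q : Set (Fin m → ℝ))
    (η : (Fin n → ℝ) → (Fin m → ℝ)) : Prop :=
  IsZMapTo P Q η ∧ Set.BijOn η P Q ∧
    ∃ μ, IsZMapTo Q P μ ∧ Set.LeftInvOn μ η P ∧ Set.RightInvOn μ η Q

/-- `η` is a strict Z-map from `P` to `Q`: injective and a Z-homeomorphism onto its image. -/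
def IsStrictZMap {n m : ℕ} (P : Set (Fin n → ℝ)) (Q : Set (Fin m → ℝ))
    (η : (Fin n → ℝ) → (Fin m → ℝ)) : Prop :=
  IsZMapTo P Q η ∧ Set.InjOn η P ∧ IsZHomeo P (η '' P) η

/-- `η` coincides with a single affine map on the set `S`. -/
def AffineOnSet {n m : ℕ} (η : (Fin n → ℝ) → (Fin m → ℝ)) (S : Set (Fin n → ℝ)) : Prop :=
  ∃ (M : Matrix (Fin m) (Fin n) ℝ) (b : Fin m → ℝ),
    ∀ x ∈ S, η x = fun i => (∑ j, M i j * x j) + b i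

end


namespace ZMapAux

/-- rational affine functional -/
noncomputable def raf {n : ℕ} (c : Fin n → ℚ) (d : ℚ) (x : Fin n → ℝ) : ℝ :=
  (∑ j, (c j : ℝ) * x j) + (d : ℝ)

lemma raf_combo {n : ℕ} (c : Fin n → ℚ) (d : ℚ) {a b : ℝ} (hab : a + b = 1)
    (v w : Fin n → ℝ) : raf c d (a • v + b • w) = a * raf c d v + b * raf c d w := by
  simp only [raf, Pi.add_apply, Pi.smul_apply, smul_eq_mul]
  have h : ∑ j, (c j : ℝ) * (a * v j + b * w j)
      = a * ∑ j, (c j : ℝ) * v j + b * ∑ j, (c j : ℝ) * w j := by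
    rw [Finset.mul_sum, Finset.mul_sum, ← Finset.sum_add_distrib]
    apply Finset.sum_congr rfl; intro j _; ring
  rw [h]; linear_combination (-(d : ℝ)) * hab

lemma raf_sum {n : ℕ} (c : Fin n → ℚ) (d : ℚ) {ι : Type*} (t : Finset ι)
    (lam : ι → ℝ) (z : ι → Fin n → ℝ) (hsum : ∑ i ∈ t, lam i = 1) :
    raf c d (∑ i ∈ t, lam i • z i) = ∑ i ∈ t, lam i * raf c d (z i) := by
  simp only [raf]
  have h1 : ∀ j, (∑ i ∈ t, lam i • z i) j = ∑ i ∈ t, lam i * z i j := by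
    intro j; rw [Finset.sum_apply]; simp
  simp_rw [h1]
  have key : ∑ j, (c j : ℝ) * (∑ i ∈ t, lam i * z i j)
      = ∑ i ∈ t, lam i * ∑ j, (c j : ℝ) * z i j := by
    simp_rw [Finset.mul_sum]
    rw [Finset.sum_comm]
    apply Finset.sum_congr rfl; intro i _
    apply Finset.sum_congr rfl; intro j _; ring
  rw [key]
  simp_rw [mul_add]
  rw [Finset.sum_add_distrib, ← Finset.sum_mul, hsum, one_mul]

lemma convex_raf_le {n : ℕ} (c : Fin n → ℚ) (d : ℚ) :
    Convex ℝ {x : Fin n → ℝ | raf c d x ≤ 0} := by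
  intro x hx y hy a b ha hb hab
  simp only [Set.mem_setOf_eq] at *
  rw [raf_combo c d hab]
  nlinarith

lemma convex_raf_eq {n : ℕ} (c : Fin n → ℚ) (d : ℚ) :
    Convex ℝ {x : Fin n → ℝ | raf c d x = 0} := by
  intro x hx y hy a b ha hb hab
  simp only [Set.mem_setOf_eq] at *
  rw [raf_combo c d hab, hx, hy]; ring

lemma raf_rat {n : ℕ} (c : Fin n → ℚ) (d : ℚ) {x : Fin n → ℝ} (hx : IsRationalPoint x) :
    ∃ q : ℚ, raf c d x = (q : ℝ) := by
  choose q hq using hx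
  refine ⟨(∑ j, c j * q j) + d, ?_⟩
  simp only [raf]
  push_cast
  congr 1
  apply Finset.sum_congr rfl; intro j _; rw [hq j]

/-- rational points are preserved by rational affine operations used for cut points -/
lemma raf_eq_zero_on_hull {n : ℕ} (c : Fin n → ℚ) (d : ℚ) (W : Finset (Fin n → ℝ))
    (h : ∀ w ∈ W, raf c d w = 0) : ∀ x ∈ convexHull ℝ (W : Set (Fin n → ℝ)), raf c d x = 0 := by
  intro x hx
  have : convexHull ℝ (W : Set (Fin n → ℝ)) ⊆ {x | raf c d x = 0} :=
    convexHull_min (fun w hw => h w hw) (convex_raf_eq c d)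
  exact this hx

lemma raf_le_zero_on_hull {n : ℕ} (c : Fin n → ℚ) (d : ℚ) (W : Finset (Fin n → ℝ))
    (h : ∀ w ∈ W, raf c d w ≤ 0) : ∀ x ∈ convexHull ℝ (W : Set (Fin n → ℝ)), raf c d x ≤ 0 := by
  intro x hx
  have : convexHull ℝ (W : Set (Fin n → ℝ)) ⊆ {x | raf c d x ≤ 0} :=
    convexHull_min (fun w hw => h w hw) (convex_raf_le c d)
  exact this hx

lemma cut_mem_hull {n : ℕ} {V : Finset (Fin n → ℝ)} {c : Fin n → ℚ} {d : ℚ}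
    {v w : Fin n → ℝ} (hv : v ∈ V) (hw : w ∈ V) (hfv : raf c d v ≤ 0) (hfw : 0 < raf c d w) :
    (raf c d w / (raf c d w - raf c d v)) • v + ((-(raf c d v)) / (raf c d w - raf c d v)) • w
      ∈ convexHull ℝ (V : Set (Fin n → ℝ)) := by
  have hD : 0 < raf c d w - raf c d v := by linarith
  exact (convex_convexHull ℝ (V : Set (Fin n → ℝ)))
    (subset_convexHull ℝ _ hv) (subset_convexHull ℝ _ hw)
    (div_nonneg hfw.le hD.le) (div_nonneg (neg_nonneg.mpr hfv) hD.le)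
    (by field_simp; ring)

lemma raf_cut {n : ℕ} {c : Fin n → ℚ} {d : ℚ} {v w : Fin n → ℝ}
    (hfv : raf c d v ≤ 0) (hfw : 0 < raf c d w) :
    raf c d ((raf c d w / (raf c d w - raf c d v)) • v
      + ((-(raf c d v)) / (raf c d w - raf c d v)) • w) = 0 := by
  have hD : 0 < raf c d w - raf c d v := by linarith
  rw [raf_combo c d (by field_simp; ring)]
  field_simp
  ring

lemma slice {n : ℕ} (V : Finset (Fin n → ℝ)) (hV : ∀ v ∈ V, IsRationalPoint v)
    (c : Fin n → ℚ) (d : ℚ) :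
    ∃ W : Finset (Fin n → ℝ), (∀ w ∈ W, IsRationalPoint w) ∧
      convexHull ℝ (W : Set (Fin n → ℝ))
        = convexHull ℝ (V : Set (Fin n → ℝ)) ∩ {x | raf c d x ≤ 0} := by
  classical
  set f := raf c d with hf
  set cut : (Fin n → ℝ) → (Fin n → ℝ) → (Fin n → ℝ) :=
    fun v w => (f w / (f w - f v)) • v + ((-(f v)) / (f w - f v)) • w with hcut
  set N := V.filter (fun v => f v ≤ 0) with hN
  set Pp := V.filter (fun v => ¬ f v ≤ 0) with hPp
  set W := N ∪ (N ×ˢ Pp).image (fun p => cut p.1 p.2) with hW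
  have hNV : ∀ v ∈ N, v ∈ V ∧ f v ≤ 0 := fun v hv => by
    simpa [hN, Finset.mem_filter] using hv
  have hPV : ∀ w ∈ Pp, w ∈ V ∧ 0 < f w := fun w hw => by
    have := Finset.mem_filter.mp hw
    exact ⟨this.1, lt_of_not_ge this.2⟩
  refine ⟨W, ?_, ?_⟩
  · -- rationality
    intro u hu
    rcases Finset.mem_union.mp hu with hu | hu
    · exact hV u (hNV u hu).1
    · rcases Finset.mem_image.mp hu with ⟨⟨v, w⟩, hp, rfl⟩
      rcases Finset.mem_product.mp hp with ⟨hvN, hwP⟩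
      obtain ⟨hvV, hfv⟩ := hNV v hvN
      obtain ⟨hwV, hfw⟩ := hPV w hwP
      obtain ⟨qv, hqv⟩ := raf_rat c d (hV v hvV)
      obtain ⟨qw, hqw⟩ := raf_rat c d (hV w hwV)
      intro i
      obtain ⟨av, hav⟩ := hV v hvV i
      obtain ⟨aw, haw⟩ := hV w hwV i
      refine ⟨(qw / (qw - qv)) * av + ((-qv) / (qw - qv)) * aw, ?_⟩
      simp only [hcut, Pi.add_apply, Pi.smul_apply, smul_eq_mul, hf, hqv, hqw, hav, haw]
      push_cast
      ring
  · apply Set.Subset.antisymm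
    · -- forward inclusion
      apply convexHull_min
      · intro u hu
        rcases Finset.mem_union.mp hu with hu | hu
        · obtain ⟨hvV, hfv⟩ := hNV u hu
          exact ⟨subset_convexHull ℝ _ hvV, hfv⟩
        · rcases Finset.mem_image.mp hu with ⟨⟨v, w⟩, hp, rfl⟩
          rcases Finset.mem_product.mp hp with ⟨hvN, hwP⟩
          obtain ⟨hvV, hfv⟩ := hNV v hvN
          obtain ⟨hwV, hfw⟩ := hPV w hwP
          exact ⟨cut_mem_hull hvV hwV hfv hfw, le_of_eq (raf_cut hfv hfw)⟩
      · exact (convex_convexHull ℝ _).inter (convex_raf_le c d)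
    · -- backward inclusion
      rintro x ⟨hxV, hxf⟩
      rw [Finset.convexHull_eq] at hxV
      obtain ⟨lam, hlam0, hlam1, hcm⟩ := hxV
      rw [Finset.centerMass_eq_of_sum_1 _ _ hlam1] at hcm
      simp only [id] at hcm
      have hVsplit : N ∪ Pp = V := Finset.filter_union_filter_not_eq _ V
      have hdisj : Disjoint N Pp := Finset.disjoint_filter_filter_not V V _
      have hsum_split : ∀ {M : Type} [AddCommMonoid M] (g : (Fin n → ℝ) → M),
          ∑ v ∈ V, g v = ∑ v ∈ N, g v + ∑ v ∈ Pp, g v := by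
        intro M _ g; rw [← hVsplit, Finset.sum_union hdisj]
      set S := ∑ v ∈ N, lam v * (-(f v)) with hS
      set T := ∑ w ∈ Pp, lam w * f w with hT
      have hS0 : 0 ≤ S := Finset.sum_nonneg fun v hv => by
        have h1 := hNV v hv
        have h0 := hlam0 v h1.1
        nlinarith [h1.2]
      have hT0 : 0 ≤ T := Finset.sum_nonneg fun w hw => by
        have h1 := hPV w hw
        have h0 := hlam0 w h1.1
        nlinarith [h1.2]
      have hfx : f x = -S + T := by
        rw [← hcm, hf, raf_sum c d V lam _ hlam1,
          hsum_split (fun v => lam v * raf c d v), hS, hT]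
        have : ∑ v ∈ N, lam v * raf c d v = -∑ v ∈ N, lam v * (-(raf c d v)) := by
          rw [← Finset.sum_neg_distrib]
          apply Finset.sum_congr rfl; intro v _; ring
        rw [this]
      have hTS : T ≤ S := by
        have hx0 : f x ≤ 0 := hxf
        linarith [hfx ▸ hx0]
      by_cases hTz : T = 0
      · -- all positive-side weights vanish
        have hsum0 : ∑ w ∈ Pp, lam w * f w = 0 := by rw [← hT]; exact hTz
        have hz : ∀ w ∈ Pp, lam w = 0 := by
          intro w hw
          have h1 := hPV w hw
          have h0 := hlam0 w h1.1
          have := (Finset.sum_eq_zero_iff_of_nonneg (fun w hw => by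
            have h1 := hPV w hw
            have h0 := hlam0 w h1.1
            nlinarith [h1.2])).mp hsum0 w hw
          rcases mul_eq_zero.mp this with h | h
          · exact h
          · exact absurd h (ne_of_gt h1.2)
        have hsumN : ∑ v ∈ N, lam v = 1 := by
          have h1 := hsum_split lam
          have h2 : ∑ w ∈ Pp, lam w = 0 := Finset.sum_eq_zero hz
          rw [hlam1, h2, add_zero] at h1
          exact h1.symm
        have hx_eq : N.centerMass lam id = x := by
          rw [Finset.centerMass_eq_of_sum_1 _ _ hsumN]
          simp only [id]
          rw [← hcm, hsum_split (fun v => lam v • v)]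
          have h2 : ∑ w ∈ Pp, lam w • w = 0 :=
            Finset.sum_eq_zero fun w hw => by rw [hz w hw, zero_smul]
          rw [h2, add_zero]
        rw [← hx_eq]
        exact Finset.centerMass_mem_convexHull N (fun v hv => hlam0 v (hNV v hv).1)
          (by rw [hsumN]; norm_num)
          (fun v hv => Finset.mem_coe.mpr (Finset.mem_union_left _ hv))
      · -- main case
        have hSpos : 0 < S := lt_of_lt_of_le (lt_of_le_of_ne hT0 (Ne.symm hTz)) hTS
        have hSne : S ≠ 0 := ne_of_gt hSpos
        set ι := ((Fin n → ℝ) ⊕ ((Fin n → ℝ) × (Fin n → ℝ))) with hι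
        let e1 : (Fin n → ℝ) ↪ ι := ⟨Sum.inl, Sum.inl_injective⟩
        let e2 : ((Fin n → ℝ) × (Fin n → ℝ)) ↪ ι := ⟨Sum.inr, Sum.inr_injective⟩
        set t : Finset ι := N.map e1 ∪ (N ×ˢ Pp).map e2 with ht
        set ω : ι → ℝ := fun i => Sum.rec (fun v => lam v * (1 - T/S))
          (fun p => lam p.1 * lam p.2 * ((f p.2 - f p.1)/S)) i with hω
        set z : ι → (Fin n → ℝ) := fun i => Sum.rec (fun v => v) (fun p => cut p.1 p.2) i with hz
        have hdisj2 : Disjoint (N.map e1) ((N ×ˢ Pp).map e2) := by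
          rw [Finset.disjoint_left]
          rintro a ha hb
          rcases Finset.mem_map.mp ha with ⟨v, _, rfl⟩
          rcases Finset.mem_map.mp hb with ⟨p, _, hpe⟩
          exact absurd hpe (by simp [e1, e2])
        have hsum_t : ∀ {M : Type} [AddCommMonoid M] (g : ι → M),
            ∑ i ∈ t, g i = ∑ v ∈ N, g (Sum.inl v) + ∑ p ∈ N ×ˢ Pp, g (Sum.inr p) := by
          intro M _ g
          rw [ht, Finset.sum_union hdisj2, Finset.sum_map, Finset.sum_map]
          rfl
        have hω0 : ∀ i ∈ t, 0 ≤ ω i := by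
          intro i hi
          rw [ht, Finset.mem_union] at hi
          rcases i with v | ⟨v, w⟩
          · have hvN : v ∈ N := by
              rcases hi with h | h
              · rcases Finset.mem_map.mp h with ⟨u, hu, he⟩
                have : u = v := Sum.inl_injective he
                exact this ▸ hu
              · rcases Finset.mem_map.mp h with ⟨p, _, he⟩
                exact absurd he (by simp [e2])
            have hTS1 : T/S ≤ 1 := (div_le_one hSpos).mpr hTS
            exact mul_nonneg (hlam0 v (hNV v hvN).1) (by linarith)
          · have hvw : (v, w) ∈ N ×ˢ Pp := by
              rcases hi with h | h
              · rcases Finset.mem_map.mp h with ⟨u, _, he⟩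
                exact absurd he (by simp [e1])
              · rcases Finset.mem_map.mp h with ⟨p, hp, he⟩
                have : p = (v, w) := Sum.inr_injective he
                exact this ▸ hp
            rcases Finset.mem_product.mp hvw with ⟨hvN, hwP⟩
            have h1 := hNV v hvN
            have h2 := hPV w hwP
            have hD : 0 < f w - f v := by linarith [h1.2, h2.2]
            exact mul_nonneg (mul_nonneg (hlam0 v h1.1) (hlam0 w h2.1))
              (div_nonneg hD.le hSpos.le)
        have hAB : ∑ v ∈ N, lam v + ∑ w ∈ Pp, lam w = 1 := by
          rw [← hsum_split lam]; exact hlam1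
        have hsum1 : ∑ i ∈ t, ω i = 1 := by
          rw [hsum_t]
          simp only [hω]
          rw [Finset.sum_product]
          have inner : ∀ v ∈ N, ∑ w ∈ Pp, lam v * lam w * ((f w - f v)/S)
              = lam v * (T/S) + (lam v * (-(f v))) * ((∑ w ∈ Pp, lam w)/S) := by
            intro v _
            have hterm : ∀ w ∈ Pp, lam v * lam w * ((f w - f v)/S)
                = (lam v * S⁻¹) * (lam w * f w) + (lam v * (-(f v)) * S⁻¹) * lam w := by
              intro w _; field_simp; ring
            rw [Finset.sum_congr rfl hterm, Finset.sum_add_distrib,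
              ← Finset.mul_sum, ← Finset.mul_sum, ← hT]
            ring
          rw [Finset.sum_congr rfl inner, Finset.sum_add_distrib]
          have e3 : ∑ v ∈ N, lam v * (T/S) = (∑ v ∈ N, lam v) * (T/S) :=
            (Finset.sum_mul _ _ _).symm
          have e4 : ∑ v ∈ N, (lam v * (-(f v))) * ((∑ w ∈ Pp, lam w)/S)
              = S * ((∑ w ∈ Pp, lam w)/S) := by
            rw [← Finset.sum_mul, ← hS]
          have e5 : ∑ v ∈ N, lam v * (1 - T/S) = (∑ v ∈ N, lam v) * (1 - T/S) :=
            (Finset.sum_mul _ _ _).symm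
          rw [e3, e4, e5]
          field_simp
          linear_combination S * hAB
        have hzW : ∀ i ∈ t, z i ∈ (W : Set (Fin n → ℝ)) := by
          intro i hi
          rw [ht, Finset.mem_union] at hi
          rcases i with v | ⟨v, w⟩
          · have hvN : v ∈ N := by
              rcases hi with h | h
              · rcases Finset.mem_map.mp h with ⟨u, hu, he⟩
                have : u = v := Sum.inl_injective he
                exact this ▸ hu
              · rcases Finset.mem_map.mp h with ⟨p, _, he⟩
                exact absurd he (by simp [e2])
            exact Finset.mem_coe.mpr (Finset.mem_union_left _ hvN)
          · have hvw : (v, w) ∈ N ×ˢ Pp := by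
              rcases hi with h | h
              · rcases Finset.mem_map.mp h with ⟨u, _, he⟩
                exact absurd he (by simp [e1])
              · rcases Finset.mem_map.mp h with ⟨p, hp, he⟩
                have : p = (v, w) := Sum.inr_injective he
                exact this ▸ hp
            refine Finset.mem_coe.mpr (Finset.mem_union_right _ ?_)
            exact Finset.mem_image.mpr ⟨(v, w), hvw, rfl⟩
        have hcmt : t.centerMass ω z = x := by
          rw [Finset.centerMass_eq_of_sum_1 _ _ hsum1, hsum_t]
          simp only [hω, hz]
          rw [Finset.sum_product]
          have hterm : ∀ v ∈ N, ∀ w ∈ Pp, (lam v * lam w * ((f w - f v)/S)) • cut v w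
              = ((lam v * S⁻¹) * (lam w * f w)) • v
                + ((lam v * (-(f v))) * (lam w * S⁻¹)) • w := by
            intro v hv w hw
            have h1 := hNV v hv
            have h2 := hPV w hw
            have hD : 0 < f w - f v := by linarith [h1.2, h2.2]
            rw [hcut]
            simp only [smul_add, smul_smul]
            congr 1
            · congr 1
              field_simp
            · congr 1
              field_simp
          have inner : ∀ v ∈ N, ∑ w ∈ Pp, (lam v * lam w * ((f w - f v)/S)) • cut v w
              = ((lam v * S⁻¹) * T) • v + ∑ w ∈ Pp, ((lam v * (-(f v))) * (lam w * S⁻¹)) • w := by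
            intro v hv
            rw [Finset.sum_congr rfl (fun w hw => hterm v hv w hw), Finset.sum_add_distrib]
            congr 1
            rw [← Finset.sum_smul]
            congr 1
            rw [← Finset.mul_sum, ← hT]
          rw [Finset.sum_congr rfl inner, Finset.sum_add_distrib]
          have swap : ∑ v ∈ N, ∑ w ∈ Pp, ((lam v * (-(f v))) * (lam w * S⁻¹)) • w
              = ∑ w ∈ Pp, lam w • w := by
            rw [Finset.sum_comm]
            apply Finset.sum_congr rfl
            intro w _
            rw [← Finset.sum_smul]
            congr 1
            rw [← Finset.sum_mul, ← hS]
            field_simp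
          rw [swap, ← add_assoc, ← Finset.sum_add_distrib]
          have merge : ∀ v ∈ N, (lam v * (1 - T/S)) • v + ((lam v * S⁻¹) * T) • v
              = lam v • v := by
            intro v _
            rw [← add_smul]
            congr 1
            field_simp
            ring
          rw [Finset.sum_congr rfl merge, ← hsum_split (fun v => lam v • v), hcm]
        rw [← hcmt]
        exact Finset.centerMass_mem_convexHull t hω0 (by rw [hsum1]; norm_num) hzW

lemma sliceList {n : ℕ} (F : List ((Fin n → ℚ) × ℚ)) (V : Finset (Fin n → ℝ))
    (hV : ∀ v ∈ V, IsRationalPoint v) :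
    ∃ W : Finset (Fin n → ℝ), (∀ w ∈ W, IsRationalPoint w) ∧
      convexHull ℝ (W : Set (Fin n → ℝ))
        = convexHull ℝ (V : Set (Fin n → ℝ)) ∩ {x | ∀ p ∈ F, raf p.1 p.2 x ≤ 0} := by
  induction F generalizing V with
  | nil => exact ⟨V, hV, by simp⟩
  | cons p F ih =>
    obtain ⟨W1, hW1r, hW1⟩ := slice V hV p.1 p.2
    obtain ⟨W, hWr, hWe⟩ := ih W1 hW1r
    refine ⟨W, hWr, ?_⟩
    rw [hWe, hW1]
    ext x
    simp only [Set.mem_inter_iff, Set.mem_setOf_eq, List.mem_cons]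
    constructor
    · rintro ⟨⟨h1, h2⟩, h3⟩
      refine ⟨h1, fun q hq => ?_⟩
      rcases hq with rfl | hq
      exacts [h2, h3 q hq]
    · rintro ⟨h1, h2⟩
      exact ⟨⟨h1, h2 p (Or.inl rfl)⟩, fun q hq => h2 q (Or.inr hq)⟩

/-- the affine map given by an integer matrix/vector pair -/
noncomputable def lmap {n m : ℕ} (l : Matrix (Fin m) (Fin n) ℤ × (Fin m → ℤ))
    (x : Fin n → ℝ) : Fin m → ℝ :=
  fun i => (∑ j, (l.1 i j : ℝ) * x j) + (l.2 i : ℝ)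

lemma lmap_continuous {n m : ℕ} (l : Matrix (Fin m) (Fin n) ℤ × (Fin m → ℤ)) :
    Continuous (lmap l) := by
  apply continuous_pi
  intro i
  exact (continuous_finset_sum _ fun j _ => (continuous_const.mul (continuous_apply j))).add
    continuous_const

/-- coefficients of the difference functional -/
noncomputable def dcoef {n m : ℕ} (l l' : Matrix (Fin m) (Fin n) ℤ × (Fin m → ℤ))
    (i : Fin m) : (Fin n → ℚ) × ℚ :=
  (fun j => ((l.1 i j - l'.1 i j : ℤ) : ℚ), ((l.2 i - l'.2 i : ℤ) : ℚ))

lemma raf_dcoef {n m : ℕ} (l l' : Matrix (Fin m) (Fin n) ℤ × (Fin m → ℤ)) (i : Fin m)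
    (x : Fin n → ℝ) :
    raf (dcoef l l' i).1 (dcoef l l' i).2 x = lmap l x i - lmap l' x i := by
  simp only [raf, lmap, dcoef]
  push_cast
  rw [Finset.sum_congr rfl (fun j _ => by ring :
    ∀ j ∈ Finset.univ, ((l.1 i j : ℝ) - (l'.1 i j : ℝ)) * x j
      = (l.1 i j : ℝ) * x j - (l'.1 i j : ℝ) * x j), Finset.sum_sub_distrib]
  ring

lemma lmap_rat {n m : ℕ} (l : Matrix (Fin m) (Fin n) ℤ × (Fin m → ℤ)) {x : Fin n → ℝ}
    (hx : IsRationalPoint x) : IsRationalPoint (lmap l x) := by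
  intro i
  choose q hq using hx
  refine ⟨(∑ j, (l.1 i j : ℚ) * q j) + (l.2 i : ℚ), ?_⟩
  simp only [lmap]
  push_cast
  congr 1
  apply Finset.sum_congr rfl
  intro j _
  rw [hq j]

/-- the affine-map bundling of `lmap` -/
noncomputable def lAff {n m : ℕ} (l : Matrix (Fin m) (Fin n) ℤ × (Fin m → ℤ)) :
    (Fin n → ℝ) →ᵃ[ℝ] (Fin m → ℝ) where
  toFun := lmap l
  linear := Matrix.mulVecLin (l.1.map (Int.cast : ℤ → ℝ))
  map_vadd' := by
    intro p v
    funext i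
    simp only [lmap, Matrix.mulVecLin_apply, Matrix.mulVec, dotProduct,
      Matrix.map_apply, Pi.add_apply, vadd_eq_add]
    rw [Finset.sum_congr rfl (fun j _ => by ring :
      ∀ j ∈ Finset.univ, (l.1 i j : ℝ) * (v j + p j)
        = (l.1 i j : ℝ) * v j + (l.1 i j : ℝ) * p j), Finset.sum_add_distrib]
    ring

lemma lAff_apply {n m : ℕ} (l : Matrix (Fin m) (Fin n) ℤ × (Fin m → ℤ)) (x : Fin n → ℝ) :
    lAff l x = lmap l x := rfl

/-- continuous selection from affine maps with coherent signs on a polytope is a single map -/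
lemma hull_selection {n m : ℕ} {P : Set (Fin n → ℝ)} {η : (Fin n → ℝ) → (Fin m → ℝ)}
    (hcont : ContinuousOn η P) (L : List (Matrix (Fin m) (Fin n) ℤ × (Fin m → ℤ)))
    (hsel : ∀ x ∈ P, ∃ l ∈ L, η x = lmap l x)
    (W : Finset (Fin n → ℝ)) (hWP : convexHull ℝ (W : Set (Fin n → ℝ)) ⊆ P)
    (hWne : W.Nonempty)
    (hsign : ∀ l ∈ L, ∀ l' ∈ L, ∀ i : Fin m,
      (∀ x ∈ convexHull ℝ (W : Set (Fin n → ℝ)), lmap l x i ≤ lmap l' x i) ∨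
      (∀ x ∈ convexHull ℝ (W : Set (Fin n → ℝ)), lmap l' x i ≤ lmap l x i)) :
    ∃ l ∈ L, ∀ x ∈ convexHull ℝ (W : Set (Fin n → ℝ)), η x = lmap l x := by
  classical
  set H := convexHull ℝ (W : Set (Fin n → ℝ)) with hH
  have hcardpos : (0:ℝ) < (W.card : ℝ) := by
    have := Finset.card_pos.mpr hWne
    exact_mod_cast this
  set u := ∑ w ∈ W, ((W.card : ℝ))⁻¹ • w with hu_def
  have hu_sum1 : ∑ _w ∈ W, ((W.card : ℝ))⁻¹ = 1 := by
    rw [Finset.sum_const, nsmul_eq_mul]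
    field_simp
  have hu : u ∈ H := by
    have := Finset.centerMass_mem_convexHull W
      (w := fun _ => ((W.card : ℝ))⁻¹) (fun i _ => by positivity)
      (by rw [hu_sum1]; norm_num) (z := id) (fun i hi => Finset.mem_coe.mpr hi)
    rwa [Finset.centerMass_eq_of_sum_1 _ _ hu_sum1] at this
  -- averaging principle
  have key : ∀ (c : Fin n → ℚ) (d : ℚ), (∀ x ∈ H, raf c d x ≤ 0) →
      (∃ y ∈ H, raf c d y ≠ 0) → raf c d u < 0 := by
    intro c d hle ⟨y, hy, hyne⟩
    have hvert : ∀ w ∈ W, raf c d w ≤ 0 := fun w hw => hle w (subset_convexHull ℝ _ hw)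
    have hex : ∃ w₀ ∈ W, raf c d w₀ < 0 := by
      by_contra hno
      push_neg at hno
      have hz : ∀ w ∈ W, raf c d w = 0 := fun w hw => le_antisymm (hvert w hw)
        (hno w hw)
      exact hyne (raf_eq_zero_on_hull c d W hz y hy)
    obtain ⟨w₀, hw₀, hw₀neg⟩ := hex
    have : raf c d u = ∑ w ∈ W, ((W.card : ℝ))⁻¹ * raf c d w := by
      rw [hu_def, raf_sum c d W _ _ hu_sum1]
    rw [this]
    have : ∑ w ∈ W, ((W.card : ℝ))⁻¹ * raf c d w < ∑ _w ∈ W, (0:ℝ) := by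
      apply Finset.sum_lt_sum
      · intro w hw
        have := hvert w hw
        have hpos : (0:ℝ) < (W.card : ℝ)⁻¹ := by positivity
        nlinarith
      · refine ⟨w₀, hw₀, ?_⟩
        have hpos : (0:ℝ) < (W.card : ℝ)⁻¹ := by positivity
        nlinarith
    simpa using this
  obtain ⟨l₀, hl₀L, hl₀⟩ := hsel u (hWP hu)
  set Econd : (Matrix (Fin m) (Fin n) ℤ × (Fin m → ℤ)) → Prop :=
    fun l => ∀ y ∈ H, lmap l y = lmap l₀ y with hEcond
  refine ⟨l₀, hl₀L, ?_⟩
  intro x hx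
  set y : ℝ → (Fin n → ℝ) := fun t => (1 - t) • u + t • x with hy_def
  have hy_mem : ∀ t ∈ Set.Icc (0:ℝ) 1, y t ∈ H := by
    intro t ht
    exact (convex_convexHull ℝ (W : Set (Fin n → ℝ))) hu hx
      (by linarith [ht.2]) ht.1 (by ring)
  have hy_cont : Continuous y := by
    apply Continuous.add
    · exact (continuous_const.sub continuous_id).smul continuous_const
    · exact continuous_id.smul continuous_const
  -- K1 : non-equivalent maps differ along the half-open segment
  have K1 : ∀ l ∈ L, ¬ Econd l → ∀ t ∈ Set.Ico (0:ℝ) 1, lmap l (y t) ≠ lmap l₀ (y t) := by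
    intro l hlL hlE t ht
    simp only [hEcond, not_forall] at hlE
    obtain ⟨y₀, hy₀H, hy₀ne⟩ := hlE
    have hy₀ne' : ∃ i, lmap l y₀ i ≠ lmap l₀ y₀ i := by
      by_contra hno
      push_neg at hno
      exact hy₀ne (funext hno)
    obtain ⟨i, hi⟩ := hy₀ne'
    rcases hsign l hlL l₀ hl₀L i with hle | hge
    · -- lmap l ≤ lmap l₀ on H : use g = dcoef l l₀ i
      have hgle : ∀ z ∈ H, raf (dcoef l l₀ i).1 (dcoef l l₀ i).2 z ≤ 0 := by
        intro z hz; rw [raf_dcoef]; linarith [hle z hz]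
      have hgne : ∃ z ∈ H, raf (dcoef l l₀ i).1 (dcoef l l₀ i).2 z ≠ 0 := by
        refine ⟨y₀, hy₀H, ?_⟩
        rw [raf_dcoef]
        exact sub_ne_zero.mpr hi
      have hgu : raf (dcoef l l₀ i).1 (dcoef l l₀ i).2 u < 0 := key _ _ hgle hgne
      have hgx : raf (dcoef l l₀ i).1 (dcoef l l₀ i).2 x ≤ 0 := hgle x hx
      have hgyt : raf (dcoef l l₀ i).1 (dcoef l l₀ i).2 (y t) < 0 := by
        rw [hy_def]
        rw [raf_combo _ _ (by ring : (1 - t) + t = 1)]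
        nlinarith [ht.1, ht.2]
      intro hcontra
      rw [raf_dcoef, hcontra, sub_self] at hgyt
      exact lt_irrefl 0 hgyt
    · -- lmap l₀ ≤ lmap l on H : use g = dcoef l₀ l i
      have hgle : ∀ z ∈ H, raf (dcoef l₀ l i).1 (dcoef l₀ l i).2 z ≤ 0 := by
        intro z hz; rw [raf_dcoef]; linarith [hge z hz]
      have hgne : ∃ z ∈ H, raf (dcoef l₀ l i).1 (dcoef l₀ l i).2 z ≠ 0 := by
        refine ⟨y₀, hy₀H, ?_⟩
        rw [raf_dcoef]
        exact sub_ne_zero.mpr (Ne.symm hi)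
      have hgu : raf (dcoef l₀ l i).1 (dcoef l₀ l i).2 u < 0 := key _ _ hgle hgne
      have hgx : raf (dcoef l₀ l i).1 (dcoef l₀ l i).2 x ≤ 0 := hgle x hx
      have hgyt : raf (dcoef l₀ l i).1 (dcoef l₀ l i).2 (y t) < 0 := by
        rw [hy_def]
        rw [raf_combo _ _ (by ring : (1 - t) + t = 1)]
        nlinarith [ht.1, ht.2]
      intro hcontra
      rw [raf_dcoef, hcontra, sub_self] at hgyt
      exact lt_irrefl 0 hgyt
  -- closed pieces
  have hTl : ∀ l : Matrix (Fin m) (Fin n) ℤ × (Fin m → ℤ),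
      IsClosed (Set.Icc (0:ℝ) 1 ∩ {t | η (y t) = lmap l (y t)}) := by
    intro l
    have hc : ContinuousOn (fun t => η (y t) - lmap l (y t)) (Set.Icc (0:ℝ) 1) := by
      apply ContinuousOn.sub
      · exact hcont.comp hy_cont.continuousOn (fun t ht => hWP (hy_mem t ht))
      · exact ((lmap_continuous l).comp hy_cont).continuousOn
    have heq : Set.Icc (0:ℝ) 1 ∩ {t | η (y t) = lmap l (y t)}
        = Set.Icc (0:ℝ) 1 ∩ (fun t => η (y t) - lmap l (y t)) ⁻¹' {0} := by
      ext t
      simp [sub_eq_zero]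
    rw [heq]
    exact hc.preimage_isClosed_of_isClosed isClosed_Icc isClosed_singleton
  set A := ⋃ l ∈ {l | l ∈ L ∧ Econd l},
    (Set.Icc (0:ℝ) 1 ∩ {t | η (y t) = lmap l (y t)}) with hA_def
  set B := ⋃ l ∈ {l | l ∈ L ∧ ¬ Econd l},
    (Set.Icc (0:ℝ) 1 ∩ {t | η (y t) = lmap l (y t)}) with hB_def
  have hAclosed : IsClosed A :=
    Set.Finite.isClosed_biUnion ((L.finite_toSet).subset (fun l hl => hl.1))
      (fun l _ => hTl l)
  have hBclosed : IsClosed B :=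
    Set.Finite.isClosed_biUnion ((L.finite_toSet).subset (fun l hl => hl.1))
      (fun l _ => hTl l)
  have hcover : Set.Ico (0:ℝ) 1 ⊆ A ∪ B := by
    intro t ht
    have htIcc : t ∈ Set.Icc (0:ℝ) 1 := Set.Ico_subset_Icc_self ht
    obtain ⟨l, hlL, hl⟩ := hsel (y t) (hWP (hy_mem t htIcc))
    by_cases hE : Econd l
    · exact Or.inl (Set.mem_biUnion ⟨hlL, hE⟩ ⟨htIcc, hl⟩)
    · exact Or.inr (Set.mem_biUnion ⟨hlL, hE⟩ ⟨htIcc, hl⟩)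
  have hy0 : y 0 = u := by
    rw [hy_def]; simp
  have hy1 : y 1 = x := by
    rw [hy_def]; simp
  have h0A : (0:ℝ) ∈ Set.Ico (0:ℝ) 1 ∩ A := by
    constructor
    · exact ⟨le_refl 0, zero_lt_one⟩
    · apply Set.mem_biUnion (show l₀ ∈ {l | l ∈ L ∧ Econd l} from ⟨hl₀L, fun y _ => rfl⟩)
      refine ⟨⟨le_refl 0, zero_le_one⟩, ?_⟩
      simp only [Set.mem_setOf_eq, hy0]
      exact hl₀
  have hABempty : Set.Ico (0:ℝ) 1 ∩ (A ∩ B) = ∅ := by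
    by_contra hne
    obtain ⟨t, htIco, htA, htB⟩ := Set.nonempty_iff_ne_empty.mpr hne
    rw [hA_def] at htA
    rw [hB_def] at htB
    obtain ⟨l, hlP, htIcc1, hl⟩ := Set.mem_iUnion₂.mp htA
    obtain ⟨hlL, hlE⟩ := hlP
    obtain ⟨l', hl'P, htIcc2, hl'⟩ := Set.mem_iUnion₂.mp htB
    obtain ⟨hl'L, hl'E⟩ := hl'P
    have h1 : η (y t) = lmap l₀ (y t) := by
      rw [hl]
      exact hlE (y t) (hy_mem t htIcc1)
    have h2 : lmap l' (y t) = lmap l₀ (y t) := by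
      rw [← hl', h1]
    exact K1 l' hl'L hl'E t htIco h2
  have hIcoA : Set.Ico (0:ℝ) 1 ⊆ A := by
    by_contra hnsub
    have hBne : (Set.Ico (0:ℝ) 1 ∩ B).Nonempty := by
      obtain ⟨t, htIco, htnA⟩ := Set.not_subset.mp hnsub
      rcases hcover htIco with h | h
      · exact absurd h htnA
      · exact ⟨t, htIco, h⟩
    have := (isPreconnected_closed_iff.mp isPreconnected_Ico) A B hAclosed hBclosed
      hcover ⟨0, h0A⟩ hBne
    rw [hABempty] at this
    exact Set.not_nonempty_empty this
  -- endpoint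
  have hIcoT : Set.Ico (0:ℝ) 1 ⊆ Set.Icc (0:ℝ) 1 ∩ {t | η (y t) = lmap l₀ (y t)} := by
    intro t ht
    have htA := hIcoA ht
    rw [hA_def] at htA
    obtain ⟨l, hlP, htIcc, hl⟩ := Set.mem_iUnion₂.mp htA
    obtain ⟨hlL, hlE⟩ := hlP
    exact ⟨htIcc, by rw [Set.mem_setOf_eq, hl]; exact hlE (y t) (hy_mem t htIcc)⟩
  have h1mem : (1:ℝ) ∈ Set.Icc (0:ℝ) 1 ∩ {t | η (y t) = lmap l₀ (y t)} := by
    have h1cl : (1:ℝ) ∈ closure (Set.Ico (0:ℝ) 1) := by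
      rw [closure_Ico (zero_ne_one)]
      exact ⟨zero_le_one, le_refl 1⟩
    have := closure_mono hIcoT h1cl
    rwa [(hTl l₀).closure_eq] at this
  have := h1mem.2
  rwa [Set.mem_setOf_eq, hy1] at this

/-- the list of sign constraints determined by a sign pattern `σ` -/
noncomputable def sigList {n m : ℕ} (L : List (Matrix (Fin m) (Fin n) ℤ × (Fin m → ℤ)))
    (σ : Fin L.length × Fin L.length × Fin m → Bool) : List ((Fin n → ℚ) × ℚ) :=
  (Finset.univ : Finset (Fin L.length × Fin L.length × Fin m)).toList.map
    (fun q => if σ q then dcoef (L.get q.1) (L.get q.2.1) q.2.2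
      else dcoef (L.get q.2.1) (L.get q.1) q.2.2)

/-- the cell of a sign pattern -/
noncomputable def sigSet {n m : ℕ} (L : List (Matrix (Fin m) (Fin n) ℤ × (Fin m → ℤ)))
    (σ : Fin L.length × Fin L.length × Fin m → Bool) : Set (Fin n → ℝ) :=
  {x | ∀ p ∈ sigList L σ, raf p.1 p.2 x ≤ 0}

lemma sig_cover {n m : ℕ} (L : List (Matrix (Fin m) (Fin n) ℤ × (Fin m → ℤ)))
    (x : Fin n → ℝ) : ∃ σ, x ∈ sigSet L σ := by
  classical
  refine ⟨fun q => decide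
    (raf (dcoef (L.get q.1) (L.get q.2.1) q.2.2).1 (dcoef (L.get q.1) (L.get q.2.1) q.2.2).2 x ≤ 0),
    ?_⟩
  intro p hp
  rcases List.mem_map.mp hp with ⟨q, _, rfl⟩
  by_cases h :
      raf (dcoef (L.get q.1) (L.get q.2.1) q.2.2).1 (dcoef (L.get q.1) (L.get q.2.1) q.2.2).2 x ≤ 0
  · rw [if_pos (show _ = true by simp only [decide_eq_true_eq]; exact h)]
    exact h
  · rw [if_neg (show ¬ _ = true by simp only [decide_eq_true_eq]; exact h)]
    rw [raf_dcoef] at h ⊢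
    linarith [not_le.mp h]

lemma cell_image {n m : ℕ} {P : Set (Fin n → ℝ)} {η : (Fin n → ℝ) → (Fin m → ℝ)}
    (hcont : ContinuousOn η P) (L : List (Matrix (Fin m) (Fin n) ℤ × (Fin m → ℤ)))
    (hsel : ∀ x ∈ P, ∃ l ∈ L, η x = lmap l x)
    (V : Finset (Fin n → ℝ)) (hVr : ∀ v ∈ V, IsRationalPoint v)
    (hVP : convexHull ℝ (V : Set (Fin n → ℝ)) ⊆ P)
    (σ : Fin L.length × Fin L.length × Fin m → Bool) :
    ∃ U : Finset (Fin m → ℝ), (∀ u ∈ U, IsRationalPoint u) ∧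
      η '' (convexHull ℝ (V : Set (Fin n → ℝ)) ∩ sigSet L σ)
        = convexHull ℝ (U : Set (Fin m → ℝ)) := by
  classical
  obtain ⟨W, hWr, hWe⟩ := sliceList (sigList L σ) V hVr
  have hWe' : convexHull ℝ (W : Set (Fin n → ℝ))
      = convexHull ℝ (V : Set (Fin n → ℝ)) ∩ sigSet L σ := hWe
  by_cases hWne : W.Nonempty
  · have hWP : convexHull ℝ (W : Set (Fin n → ℝ)) ⊆ P := by
      rw [hWe']
      exact (Set.inter_subset_left).trans hVP
    have hWsig : convexHull ℝ (W : Set (Fin n → ℝ)) ⊆ sigSet L σ := by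
      rw [hWe']
      exact Set.inter_subset_right
    have hsign : ∀ l ∈ L, ∀ l' ∈ L, ∀ i : Fin m,
        (∀ x ∈ convexHull ℝ (W : Set (Fin n → ℝ)), lmap l x i ≤ lmap l' x i) ∨
        (∀ x ∈ convexHull ℝ (W : Set (Fin n → ℝ)), lmap l' x i ≤ lmap l x i) := by
      intro l hl l' hl' i
      obtain ⟨a, ha⟩ := List.get_of_mem hl
      obtain ⟨b, hb⟩ := List.get_of_mem hl'
      set q : Fin L.length × Fin L.length × Fin m := (a, b, i) with hq
      have hqmem : (if σ q then dcoef (L.get q.1) (L.get q.2.1) q.2.2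
          else dcoef (L.get q.2.1) (L.get q.1) q.2.2) ∈ sigList L σ :=
        List.mem_map.mpr ⟨q, Finset.mem_toList.mpr (Finset.mem_univ q), rfl⟩
      by_cases hσ : σ q
      · left
        intro x hx
        have := hWsig hx _ hqmem
        rw [if_pos hσ] at this
        simp only [hq] at this
        rw [ha, hb, raf_dcoef] at this
        linarith
      · right
        intro x hx
        have := hWsig hx _ hqmem
        rw [if_neg hσ] at this
        simp only [hq] at this
        rw [ha, hb, raf_dcoef] at this
        linarith
    obtain ⟨l₀, hl₀L, hl₀⟩ := hull_selection hcont L hsel W hWP hWne hsign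
    refine ⟨W.image (lmap l₀), ?_, ?_⟩
    · intro u hu
      rcases Finset.mem_image.mp hu with ⟨w, hw, rfl⟩
      exact lmap_rat l₀ (hWr w hw)
    · rw [← hWe']
      have h1 : η '' (convexHull ℝ (W : Set (Fin n → ℝ)))
          = lAff l₀ '' (convexHull ℝ (W : Set (Fin n → ℝ))) :=
        Set.image_congr (fun x hx => hl₀ x hx)
      rw [h1, AffineMap.image_convexHull]
      congr 1
      rw [Finset.coe_image]
      rfl
  · have hWempty : W = ∅ := Finset.not_nonempty_iff_eq_empty.mp hWne
    refine ⟨∅, by simp, ?_⟩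
    rw [← hWe', hWempty]
    simp

/-- the set of vertices of sign cells, for the main assembly -/
theorem main_statement {n m : ℕ} {P : Set (Fin n → ℝ)}
    (hP : ∃ 𝒱 : Finset (Finset (Fin n → ℝ)),
      (∀ V ∈ 𝒱, ∀ v ∈ V, IsRationalPoint v) ∧
      P = ⋃ V ∈ 𝒱, convexHull ℝ (V : Set (Fin n → ℝ)))
    {η : (Fin n → ℝ) → (Fin m → ℝ)}
    (hcont : ContinuousOn η P)
    (L : List (Matrix (Fin m) (Fin n) ℤ × (Fin m → ℤ)))
    (hsel : ∀ x ∈ P, ∃ l ∈ L, η x = lmap l x) :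
    ∃ 𝒲 : Finset (Finset (Fin m → ℝ)),
      (∀ U ∈ 𝒲, ∀ u ∈ U, IsRationalPoint u) ∧
      η '' P = ⋃ U ∈ 𝒲, convexHull ℝ (U : Set (Fin m → ℝ)) := by
  classical
  obtain ⟨𝒱, h𝒱r, hPe⟩ := hP
  have hVP : ∀ V ∈ 𝒱, convexHull ℝ (V : Set (Fin n → ℝ)) ⊆ P := by
    intro V hV
    rw [hPe]
    intro x hx
    exact Set.mem_biUnion hV hx
  have hchoice : ∀ p : {V // V ∈ 𝒱} × (Fin L.length × Fin L.length × Fin m → Bool),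
      ∃ U : Finset (Fin m → ℝ), (∀ u ∈ U, IsRationalPoint u) ∧
        η '' (convexHull ℝ ((p.1 : Finset (Fin n → ℝ)) : Set (Fin n → ℝ)) ∩ sigSet L p.2)
          = convexHull ℝ (U : Set (Fin m → ℝ)) :=
    fun p => cell_image hcont L hsel _ (h𝒱r _ p.1.2) (hVP _ p.1.2) p.2
  choose U hUr hUe using hchoice
  refine ⟨Finset.image U Finset.univ, ?_, ?_⟩
  · intro Uu hUu
    rcases Finset.mem_image.mp hUu with ⟨p, _, rfl⟩
    exact hUr p
  · have hPdecomp : P = ⋃ p : {V // V ∈ 𝒱} × (Fin L.length × Fin L.length × Fin m → Bool),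
        (convexHull ℝ ((p.1 : Finset (Fin n → ℝ)) : Set (Fin n → ℝ)) ∩ sigSet L p.2) := by
      apply Set.Subset.antisymm
      · intro x hx
        rw [hPe] at hx
        obtain ⟨V, hV, hxV⟩ := Set.mem_iUnion₂.mp hx
        obtain ⟨σ, hxσ⟩ := sig_cover L x
        exact Set.mem_iUnion.mpr ⟨⟨⟨V, hV⟩, σ⟩, hxV, hxσ⟩
      · intro x hx
        obtain ⟨p, hp⟩ := Set.mem_iUnion.mp hx
        exact hVP _ p.1.2 hp.1
    rw [hPdecomp, Set.image_iUnion]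
    simp_rw [hUe]
    ext z
    simp only [Set.mem_iUnion, Finset.mem_image, Finset.mem_univ, true_and, exists_prop]
    constructor
    · rintro ⟨p, hp⟩
      exact ⟨U p, ⟨p, rfl⟩, hp⟩
    · rintro ⟨Uu, ⟨p, rfl⟩, hz⟩
      exact ⟨p, hz⟩

end ZMapAux

/-- Lemma (ImagesZmorph0): the image of a rational polyhedron under a Z-map is a rational
polyhedron. -/
theorem statement4 {n m : ℕ} {P : Set (Fin n → ℝ)} (hP : IsRationalPolyhedron P)
    {η : (Fin n → ℝ) → (Fin m → ℝ)} (hη : IsZMap P η) :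
    IsRationalPolyhedron (η '' P) := by
  obtain ⟨hcont, L, hsel⟩ := hη
  exact ZMapAux.main_statement hP hcont L (fun x hx => by
    obtain ⟨l, hl, he⟩ := hsel x hx
    exact ⟨l, hl, he⟩)
end

section
/- Let S = conv(x_1,…,x_k) ⊆ ℝ^n be a regular (k−1)-simplex (so x_1,…,x_k are affinely independent rational points whose homogeneous correspondents extend to a basis of ℤ^{n+1}), and let y_1,…,y_k be rational points in ℝ^n. Then the following are equivalent: (i) for each i = 1,…,k, den(y_i) divides den(x_i); (ii) there exist an integer matrix M ∈ ℤ^{n×n} and an integer vector b ∈ ℤ^n such that M x_i + b = y_i for all i = 1,…,k. -/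
open scoped BigOperators

lemma den_spec {n : ℕ} {x : Fin n → ℝ} (hx : IsRationalPoint x) :
    0 < den x ∧ ∀ i, ∃ z : ℤ, ((den x : ℕ) : ℝ) * x i = (z : ℝ) := by
  have hne : Set.Nonempty {d : ℕ | 0 < d ∧ ∀ i, ∃ z : ℤ, (d : ℝ) * x i = (z : ℝ)} := by
    choose q hq using hx
    refine ⟨∏ i, (q i).den, Finset.prod_pos fun i _ => (q i).pos, fun i => ?_⟩
    refine ⟨(∏ l ∈ Finset.univ.erase i, ((q l).den : ℤ)) * (q i).num, ?_⟩
    have h1 : (∏ l, (q l).den) = (q i).den * ∏ l ∈ Finset.univ.erase i, (q l).den :=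
      (Finset.mul_prod_erase _ _ (Finset.mem_univ i)).symm
    have h2 : ((∏ l, (q l).den : ℕ) : ℚ) * q i
        = ((∏ l ∈ Finset.univ.erase i, ((q l).den : ℤ)) * (q i).num : ℤ) := by
      push_cast [h1]
      linear_combination (∏ l ∈ Finset.univ.erase i, ((q l).den : ℚ)) * Rat.mul_den_eq_num (q i)
    rw [hq i]
    exact_mod_cast congrArg (fun r : ℚ => (r : ℝ)) h2
  have := Nat.sInf_mem hne
  exact ⟨this.1, this.2⟩

lemma den_dvd {n : ℕ} {x : Fin n → ℝ} {d : ℕ} (hd : 0 < d)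
    (h : ∀ i, ∃ z : ℤ, (d : ℝ) * x i = (z : ℝ)) : den x ∣ d := by
  set D := {d : ℕ | 0 < d ∧ ∀ i, ∃ z : ℤ, (d : ℝ) * x i = (z : ℝ)} with hD
  have hdD : d ∈ D := ⟨hd, h⟩
  have hmem : den x ∈ D := Nat.sInf_mem ⟨d, hdD⟩
  set m := den x with hm
  have hgmem : Nat.gcd m d ∈ D := by
    refine ⟨Nat.gcd_pos_of_pos_right _ hd, fun i => ?_⟩
    obtain ⟨z1, hz1⟩ := hmem.2 i
    obtain ⟨z2, hz2⟩ := h i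
    refine ⟨Int.gcdA m d * z1 + Int.gcdB m d * z2, ?_⟩
    have hb := Int.gcd_eq_gcd_ab (m : ℤ) (d : ℤ)
    have h3 : ((Nat.gcd m d : ℕ) : ℤ) = (m : ℤ) * Int.gcdA m d + (d : ℤ) * Int.gcdB m d := by
      rw [Int.gcd_natCast_natCast] at hb; exact_mod_cast hb
    have hbr : ((Nat.gcd m d : ℕ) : ℝ)
        = (m : ℝ) * (Int.gcdA m d : ℝ) + (d : ℝ) * (Int.gcdB m d : ℝ) := by
      exact_mod_cast congrArg (Int.cast : ℤ → ℝ) h3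
    rw [hbr]
    push_cast
    linear_combination (Int.gcdA m d : ℝ) * hz1 + (Int.gcdB m d : ℝ) * hz2
  have h1 : m ≤ Nat.gcd m d := Nat.sInf_le hgmem
  have h2 : Nat.gcd m d = m := le_antisymm (Nat.gcd_le_left d hmem.1) h1
  exact h2 ▸ Nat.gcd_dvd_right m d

/-- Lemma (LinearMap): for the vertices `x_1, …, x_k` of a regular `(k-1)`-simplex and rational
points `y_1, …, y_k`, the denominators `den(y_i)` divide `den(x_i)` for all `i` iff there are an
integer matrix `M` and an integer vector `b` with `M xᵢ + b = yᵢ` for all `i`. -/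
theorem statement6 {n k : ℕ} (x : Fin k → (Fin n → ℝ)) (hx : IsRegularFamily x)
    (y : Fin k → (Fin n → ℝ)) (hy : ∀ i, IsRationalPoint (y i)) :
    (∀ i, den (y i) ∣ den (x i)) ↔
      ∃ (M : Matrix (Fin n) (Fin n) ℤ) (b : Fin n → ℤ),
        ∀ i, (fun j => (∑ l, (M j l : ℝ) * x i l) + (b j : ℝ)) = y i := by
  classical
  obtain ⟨hxrat, -, bb, f, hf, hbf⟩ := hx
  have hxspec := fun i => den_spec (hxrat i)
  have hyspec := fun i => den_spec (hy i)
  -- facts about the basis vectors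
  have hbfC : ∀ i (j : Fin n), ((bb (f i) j.castSucc : ℤ) : ℝ) = (den (x i) : ℝ) * x i j := by
    intro i j
    have := congrFun (hbf i) j.castSucc
    simpa [homCorr, Fin.snoc_castSucc] using this
  have hbfL : ∀ i, (bb (f i) (Fin.last n) : ℤ) = (den (x i) : ℤ) := by
    intro i
    have := congrFun (hbf i) (Fin.last n)
    simp only [homCorr, Fin.snoc_last] at this
    exact_mod_cast this
  constructor
  · intro hdvd
    -- the target integer vectors
    have hw : ∀ i, ∃ w : Fin (n + 1) → ℤ,
        (∀ j : Fin n, ((w j.castSucc : ℤ) : ℝ) = (den (x i) : ℝ) * y i j) ∧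
          w (Fin.last n) = (den (x i) : ℤ) := by
      intro i
      obtain ⟨c, hc⟩ := hdvd i
      choose z hz using (hyspec i).2
      refine ⟨Fin.snoc (fun j => (c : ℤ) * z j) (den (x i)), fun j => ?_, by simp⟩
      rw [Fin.snoc_castSucc, hc]
      push_cast
      linear_combination (-(c : ℝ)) * hz j
    choose w hw1 hw2 using hw
    -- define the integer linear map
    set g : Fin (n + 1) → (Fin (n + 1) → ℤ) := fun p =>
      if h : ∃ i, f i = p then w h.choose
      else Pi.single (Fin.last n) (bb p (Fin.last n)) with hg
    set T : (Fin (n + 1) → ℤ) →ₗ[ℤ] (Fin (n + 1) → ℤ) := bb.constr ℤ g with hT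
    have hTb : ∀ p, T (bb p) = g p := fun p => bb.constr_basis ℤ g p
    have hgf : ∀ i, g (f i) = w i := by
      intro i
      have hex : ∃ i', f i' = f i := ⟨i, rfl⟩
      rw [hg]
      simp only [dif_pos hex]
      have : hex.choose = i := hf hex.choose_spec
      rw [this]
    -- T preserves the last coordinate
    have hlast : ∀ v : Fin (n + 1) → ℤ, T v (Fin.last n) = v (Fin.last n) := by
      have : (LinearMap.proj (Fin.last n) ∘ₗ T : (Fin (n + 1) → ℤ) →ₗ[ℤ] ℤ)
          = LinearMap.proj (Fin.last n) := by
        apply bb.ext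
        intro p
        simp only [LinearMap.comp_apply, LinearMap.proj_apply, hTb]
        by_cases hex : ∃ i, f i = p
        · obtain ⟨i, rfl⟩ := hex
          rw [hgf i, hw2 i, hbfL i]
        · rw [hg]; simp only [dif_neg hex]
          simp
      intro v
      exact LinearMap.congr_fun this v
    -- expansion of T in coordinates
    have hexp : ∀ (v : Fin (n + 1) → ℤ) (q : Fin (n + 1)),
        T v q = ∑ p, v p * T (Pi.single p 1) q := by
      intro v q
      have hv : v = ∑ p, v p • (Pi.single p 1 : Fin (n + 1) → ℤ) := by
        funext r
        rw [Finset.sum_apply]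
        simp [Pi.single_apply, mul_ite]
      conv_lhs => rw [hv]
      simp only [map_sum, map_smul, Finset.sum_apply, Pi.smul_apply, smul_eq_mul]
    refine ⟨fun j l => T (Pi.single l.castSucc 1) j.castSucc,
      fun j => T (Pi.single (Fin.last n) 1) j.castSucc, fun i => ?_⟩
    funext j
    have hden : ((den (x i) : ℕ) : ℝ) ≠ 0 := by
      have h := (hxspec i).1
      positivity
    -- key identity in ℤ
    have hkey : w i j.castSucc
        = (∑ l : Fin n, bb (f i) l.castSucc * T (Pi.single l.castSucc 1) j.castSucc)
          + bb (f i) (Fin.last n) * T (Pi.single (Fin.last n) 1) j.castSucc := by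
      have h1 : T (bb (f i)) j.castSucc = w i j.castSucc := by rw [hTb, hgf]
      rw [← h1, hexp (bb (f i)) j.castSucc, Fin.sum_univ_castSucc]
    -- cast to ℝ
    have hkeyR : (den (x i) : ℝ) * y i j
        = (∑ l : Fin n, ((den (x i) : ℝ) * x i l) * (T (Pi.single l.castSucc 1) j.castSucc : ℝ))
          + (den (x i) : ℝ) * (T (Pi.single (Fin.last n) 1) j.castSucc : ℝ) := by
      have := congrArg (fun z : ℤ => (z : ℝ)) hkey
      push_cast at this
      rw [hw1 i j] at this
      rw [this, hbfL i]
      push_cast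
      congr 1
      apply Finset.sum_congr rfl
      intro l _
      rw [hbfC i l]
    apply mul_left_cancel₀ hden
    beta_reduce
    rw [hkeyR, mul_add, Finset.mul_sum]
    congr 1
    exact Finset.sum_congr rfl fun l _ => by ring
  · rintro ⟨M, b, hMb⟩ i
    choose z hz using (hxspec i).2
    apply den_dvd (hxspec i).1
    intro j
    refine ⟨(∑ l, M j l * z l) + (den (x i) : ℤ) * b j, ?_⟩
    have hyj : y i j = (∑ l, (M j l : ℝ) * x i l) + (b j : ℝ) := (congrFun (hMb i) j).symm
    rw [hyj]
    push_cast
    rw [mul_add, Finset.mul_sum]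
    congr 1
    apply Finset.sum_congr rfl
    intro l _
    rw [← hz l]
    ring
end

section
/- Let P ⊆ ℝ^n and Q ⊆ ℝ^m be rational polyhedra and η : P → Q a Z-map. Then: (i) η is injective if and only if for every rational polyhedron R and all Z-maps μ_1, μ_2 : R → P with η ∘ μ_1 = η ∘ μ_2 one has μ_1 = μ_2; (ii) η is surjective onto Q if and only if for every rational polyhedron R and all Z-maps μ_1, μ_2 : Q → R with μ_1 ∘ η = μ_2 ∘ η one has μ_1 = μ_2. -/
open scoped BigOperators

noncomputable def zev {n m : ℕ} (l : Matrix (Fin m) (Fin n) ℤ × (Fin m → ℤ))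
    (x : Fin n → ℝ) : Fin m → ℝ :=
  fun i => (∑ j, (l.1 i j : ℝ) * x j) + (l.2 i : ℝ)

noncomputable def qev {n m : ℕ} (l : Matrix (Fin m) (Fin n) ℤ × (Fin m → ℤ))
    (r : Fin n → ℚ) (i : Fin m) : ℚ :=
  (∑ j, (l.1 i j : ℚ) * r j) + (l.2 i : ℚ)

open Classical in
/-- A canonical rational representative of a rational point. -/
noncomputable def rc {n : ℕ} (v : Fin n → ℝ) : Fin n → ℚ :=
  fun i => if h : ∃ q : ℚ, v i = (q : ℝ) then h.choose else 0

lemma rc_spec {n : ℕ} {v : Fin n → ℝ} (hv : IsRationalPoint v) (i : Fin n) :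
    v i = ((rc v i : ℚ) : ℝ) := by
  have h := hv i
  simp only [rc, dif_pos h]
  exact h.choose_spec

lemma zev_rat_cast {n m : ℕ} (l : Matrix (Fin m) (Fin n) ℤ × (Fin m → ℤ))
    {v : Fin n → ℝ} (hv : IsRationalPoint v) (i : Fin m) :
    zev l v i = ((qev l (rc v) i : ℚ) : ℝ) := by
  rw [zev, qev]
  push_cast
  congr 1
  apply Finset.sum_congr rfl
  intro j _
  rw [rc_spec hv j]

lemma zev_comb {n m : ℕ} {α : Type*} (l : Matrix (Fin m) (Fin n) ℤ × (Fin m → ℤ))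
    (T : Finset α) (φ : α → (Fin n → ℝ)) (u : α → ℝ) (hu : ∑ v ∈ T, u v = 1) (i : Fin m) :
    zev l (∑ v ∈ T, u v • φ v) i = ∑ v ∈ T, u v * zev l (φ v) i := by
  simp only [zev]
  have hcoord : ∀ j, (∑ v ∈ T, u v • φ v) j = ∑ v ∈ T, u v * φ v j := by
    intro j
    rw [Finset.sum_apply]
    simp
  calc (∑ j, (l.1 i j : ℝ) * (∑ v ∈ T, u v • φ v) j) + (l.2 i : ℝ)
      = (∑ j, ∑ v ∈ T, (l.1 i j : ℝ) * (u v * φ v j)) + (l.2 i : ℝ) := by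
        congr 1
        apply Finset.sum_congr rfl
        intro j _
        rw [hcoord j, Finset.mul_sum]
    _ = (∑ v ∈ T, ∑ j, (l.1 i j : ℝ) * (u v * φ v j)) + (∑ v ∈ T, u v) * (l.2 i : ℝ) := by
        rw [Finset.sum_comm, hu, one_mul]
    _ = ∑ v ∈ T, u v * ((∑ j, (l.1 i j : ℝ) * φ v j) + (l.2 i : ℝ)) := by
        rw [Finset.sum_mul, ← Finset.sum_add_distrib]
        apply Finset.sum_congr rfl
        intro v _
        rw [mul_add, Finset.mul_sum]
        congr 1
        apply Finset.sum_congr rfl; intro j _; ring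

lemma rat_mul_nat_int (q : ℚ) {k : ℕ} (h : q.den ∣ k) : ∃ z : ℤ, q * (k : ℚ) = (z : ℚ) := by
  obtain ⟨c, hc⟩ := h
  refine ⟨q.num * c, ?_⟩
  have hden : ((q.den : ℚ)) ≠ 0 := by exact_mod_cast q.den_nz
  have hq : q * (q.den : ℚ) = (q.num : ℚ) := by
    have h := Rat.num_div_den q
    rw [div_eq_iff hden] at h
    exact h.symm
  rw [hc]
  push_cast
  rw [← mul_assoc, hq]

lemma rational_witness {n m : ℕ} {P : Set (Fin n → ℝ)} {η : (Fin n → ℝ) → (Fin m → ℝ)}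
    (H : ∀ (k : ℕ) (R : Set (Fin k → ℝ)), IsRationalPolyhedron R →
        ∀ μ₁ μ₂ : (Fin k → ℝ) → (Fin n → ℝ), IsZMapTo R P μ₁ → IsZMapTo R P μ₂ →
          (∀ x ∈ R, η (μ₁ x) = η (μ₂ x)) → ∀ x ∈ R, μ₁ x = μ₂ x)
    {x' y' : Fin n → ℝ} (hx'P : x' ∈ P) (hy'P : y' ∈ P)
    (hx'r : IsRationalPoint x') (hy'r : IsRationalPoint y') (hxy : η x' = η y') :
    x' = y' := by
  classical
  set r1 : Fin n → ℚ := rc x' with hr1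
  set r2 : Fin n → ℚ := rc y' with hr2
  set d1 : ℕ := ∏ i, (r1 i).den with hd1
  set d2 : ℕ := ∏ i, (r2 i).den with hd2
  set Dd : ℕ := d1 * d2 with hDd
  have hDdpos : 0 < Dd := by
    apply Nat.mul_pos <;> exact Finset.prod_pos fun i _ => Rat.den_pos _
  have hDdR : (0 : ℝ) < (Dd : ℝ) := by exact_mod_cast hDdpos
  set c : Fin 1 → ℝ := fun _ => 1 / (Dd : ℝ) with hc
  set R : Set (Fin 1 → ℝ) := {c} with hR
  have hRrat : IsRationalPolyhedron R := by
    refine ⟨{({c} : Finset (Fin 1 → ℝ))}, ?_, ?_⟩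
    · intro V hV v hv
      rw [Finset.mem_singleton] at hV; subst hV
      rw [Finset.mem_singleton] at hv; subst hv
      intro i
      refine ⟨1 / (Dd : ℚ), ?_⟩
      rw [hc]
      push_cast
      ring
    · rw [Finset.set_biUnion_singleton, Finset.coe_singleton, convexHull_singleton, hR]
  have hz1 : ∀ i, ∃ z : ℤ, (r1 i) * (Dd : ℚ) = (z : ℚ) := by
    intro i
    exact rat_mul_nat_int _ ((Finset.dvd_prod_of_mem _ (Finset.mem_univ i)).mul_right d2)
  have hz2 : ∀ i, ∃ z : ℤ, (r2 i) * (Dd : ℚ) = (z : ℚ) := by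
    intro i
    exact rat_mul_nat_int _ ((Finset.dvd_prod_of_mem _ (Finset.mem_univ i)).mul_left d1)
  choose z1 hz1 using hz1
  choose z2 hz2 using hz2
  set μ₁ : (Fin 1 → ℝ) → (Fin n → ℝ) := fun u => fun i => (z1 i : ℝ) * u 0 with hμ₁
  set μ₂ : (Fin 1 → ℝ) → (Fin n → ℝ) := fun u => fun i => (z2 i : ℝ) * u 0 with hμ₂
  have hval : ∀ (z : Fin n → ℤ) (r : Fin n → ℚ), (∀ i, r i * (Dd : ℚ) = z i) →
      ∀ i, (z i : ℝ) * c 0 = (r i : ℝ) := by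
    intro z r hzr i
    have h1 : ((z i : ℚ) : ℝ) = (r i : ℝ) * (Dd : ℝ) := by
      rw [← hzr i]; push_cast; ring
    rw [hc]
    simp only
    rw [show ((z i : ℤ) : ℝ) = ((z i : ℚ) : ℝ) by push_cast; ring, h1]
    field_simp
  have hμ₁c : μ₁ c = x' := by
    funext i
    rw [hμ₁]
    simp only
    rw [hval z1 r1 hz1 i, hr1, ← rc_spec hx'r i]
  have hμ₂c : μ₂ c = y' := by
    funext i
    rw [hμ₂]
    simp only
    rw [hval z2 r2 hz2 i, hr2, ← rc_spec hy'r i]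
  have hmem : ∀ u ∈ R, u = c := fun u hu => hu
  have hZ : ∀ (z : Fin n → ℤ) (μ : (Fin 1 → ℝ) → (Fin n → ℝ)),
      μ = (fun u => fun i => (z i : ℝ) * u 0) → μ c ∈ P → IsZMapTo R P μ := by
    intro z μ hμdef hμP
    refine ⟨⟨?_, [(fun i _ => z i, (0 : Fin n → ℤ))], ?_⟩, ?_⟩
    · rw [hμdef]
      exact (continuous_pi fun i => continuous_const.mul (continuous_apply 0)).continuousOn
    · intro u hu
      refine ⟨_, List.mem_singleton_self _, ?_⟩
      rw [hμdef]
      funext i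
      simp [Fin.sum_univ_one]
    · intro u hu
      rw [hmem u hu]
      exact hμP
  have hμ₁Z : IsZMapTo R P μ₁ := hZ z1 μ₁ hμ₁ (hμ₁c ▸ hx'P)
  have hμ₂Z : IsZMapTo R P μ₂ := hZ z2 μ₂ hμ₂ (hμ₂c ▸ hy'P)
  have hpre : ∀ u ∈ R, η (μ₁ u) = η (μ₂ u) := by
    intro u hu
    rw [hmem u hu, hμ₁c, hμ₂c]
    exact hxy
  have hfin := H 1 R hRrat μ₁ μ₂ hμ₁Z hμ₂Z hpre c rfl
  rw [hμ₁c, hμ₂c] at hfin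
  exact hfin
private lemma abs_sum_le_sum_abs' {ι : Type*} (s : Finset ι) (f : ι → ℝ) :
    |∑ i ∈ s, f i| ≤ ∑ i ∈ s, |f i| := Finset.abs_sum_le_sum_abs f s

/-- Rational points are dense in the real solution set of a finite rational linear system. -/
lemma ratDense {ι : Type*} [Fintype ι] (E : List ((ι → ℚ) × ℚ)) (x : ι → ℝ)
    (hx : ∀ p ∈ E, ∑ i, (p.1 i : ℝ) * x i = (p.2 : ℝ)) {ε : ℝ} (hε : 0 < ε) :
    ∃ q : ι → ℚ, (∀ p ∈ E, ∑ i, p.1 i * q i = p.2) ∧ ∀ i, |(q i : ℝ) - x i| < ε := by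
  induction E generalizing x ε with
  | nil =>
    refine ⟨fun i => (exists_rat_near (x i) hε).choose, by simp, fun i => ?_⟩
    have := (exists_rat_near (x i) hε).choose_spec
    rwa [abs_sub_comm] at this
  | cons p E' IH =>
    obtain ⟨a, c⟩ := p
    set ℓR : (ι → ℝ) → ℝ := fun y => (∑ i, (a i : ℝ) * y i) - c with hℓR
    set ℓQ : (ι → ℚ) → ℚ := fun y => (∑ i, a i * y i) - c with hℓQ
    have hcast : ∀ q : ι → ℚ, ((ℓQ q : ℚ) : ℝ) = ℓR (fun i => (q i : ℝ)) := by
      intro q; simp only [hℓQ, hℓR]; push_cast; ring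
    set C : ℝ := (∑ i, |(a i : ℝ)|) + 1 with hC
    have hC1 : (1:ℝ) ≤ C := by
      have : (0:ℝ) ≤ ∑ i, |(a i : ℝ)| := Finset.sum_nonneg fun i _ => abs_nonneg _
      simp [hC]; linarith
    have hC0 : (0:ℝ) < C := lt_of_lt_of_le one_pos hC1
    have hlip : ∀ (y z : ι → ℝ) (δ : ℝ), (0 ≤ δ) → (∀ i, |y i - z i| ≤ δ) →
        |ℓR y - ℓR z| ≤ (C - 1) * δ := by
      intro y z δ h0δ hδ
      have : ℓR y - ℓR z = ∑ i, (a i : ℝ) * (y i - z i) := by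
        simp only [hℓR, mul_sub]; rw [Finset.sum_sub_distrib]; ring
      rw [this]
      calc |∑ i, (a i : ℝ) * (y i - z i)| ≤ ∑ i, |(a i : ℝ) * (y i - z i)| :=
            abs_sum_le_sum_abs' _ _
        _ ≤ ∑ i, |(a i : ℝ)| * δ := by
            refine Finset.sum_le_sum fun i _ => ?_
            rw [abs_mul]
            exact mul_le_mul_of_nonneg_left (hδ i) (abs_nonneg _)
        _ = (C - 1) * δ := by rw [← Finset.sum_mul]; simp [hC]
    have hxE' : ∀ p ∈ E', ∑ i, (p.1 i : ℝ) * x i = (p.2 : ℝ) :=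
      fun p hp => hx p (List.mem_cons_of_mem _ hp)
    have hxp : ℓR x = 0 := by
      have := hx (a, c) (List.mem_cons_self)
      simp only [hℓR]; simp at this ⊢; linarith [this]
    by_cases hA : ∀ y : ι → ℝ, (∀ p ∈ E', ∑ i, (p.1 i : ℝ) * y i = (p.2 : ℝ)) → ℓR y = 0
    · obtain ⟨q, hq1, hq2⟩ := IH x hxE' hε
      refine ⟨q, ?_, hq2⟩
      intro p hp
      rcases List.mem_cons.mp hp with h | h
      · have hq' : ∀ p ∈ E', ∑ i, (p.1 i : ℝ) * ((q i : ℚ) : ℝ) = (p.2 : ℝ) := by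
          intro p hp
          have := hq1 p hp
          exact_mod_cast congrArg (fun r : ℚ => (r : ℝ)) this
        have h0 := hA (fun i => (q i : ℝ)) hq'
        rw [← hcast] at h0
        have h0' : ℓQ q = 0 := by exact_mod_cast h0
        subst h
        simpa [hℓQ, sub_eq_zero] using h0'
      · exact hq1 p h
    · push_neg at hA
      obtain ⟨y₀, hy₀E, hy₀⟩ := hA
      have hLy₀ : 0 < |ℓR y₀| := abs_pos.mpr hy₀
      obtain ⟨z, hzE, hz⟩ := IH y₀ hy₀E (div_pos hLy₀ hC0)
      set zR : ι → ℝ := fun i => (z i : ℝ) with hzR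
      have hzne : ℓR zR ≠ 0 := by
        intro h0
        have h1 : |ℓR zR - ℓR y₀| ≤ (C - 1) * (|ℓR y₀| / C) :=
          hlip _ _ _ (le_of_lt (div_pos hLy₀ hC0)) (fun i => le_of_lt (hz i))
        have h2 : (C - 1) * (|ℓR y₀| / C) < C * (|ℓR y₀| / C) := by
          apply mul_lt_mul_of_pos_right _ (div_pos hLy₀ hC0); linarith
        rw [h0, zero_sub, abs_neg] at h1
        have h3 : C * (|ℓR y₀| / C) = |ℓR y₀| := by field_simp
        linarith
      set Lz : ℝ := |ℓR zR| with hLzdef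
      have hLz : 0 < Lz := abs_pos.mpr hzne
      set B : ℝ := (∑ i, (|zR i| + |x i|)) + 1 with hBdef
      have hBi : ∀ i, |zR i| + |x i| ≤ B - 1 := by
        intro i
        have : |zR i| + |x i| ≤ ∑ j, (|zR j| + |x j|) :=
          Finset.single_le_sum (f := fun j => |zR j| + |x j|)
            (fun j _ => by positivity) (Finset.mem_univ i)
        simp [hBdef]; linarith
      have hB : 0 < B := by
        have : (0:ℝ) ≤ ∑ i, (|zR i| + |x i|) := Finset.sum_nonneg fun i _ => by positivity
        simp [hBdef]; linarith
      have hfac : 0 < 1 + 2 * C * B / Lz := by positivity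
      set δ : ℝ := min 1 (min (Lz / (2 * C)) (ε / (2 * (1 + 2 * C * B / Lz)))) with hδdef
      have hδ0 : 0 < δ := by
        apply lt_min one_pos
        apply lt_min (by positivity) (by positivity)
      obtain ⟨y, hyE, hy⟩ := IH x hxE' hδ0
      set yR : ι → ℝ := fun i => (y i : ℝ) with hyR
      have hy' : ∀ i, |yR i - x i| ≤ δ := fun i => (hy i).le
      have hℓy : |ℓR yR| ≤ C * δ := by
        have := hlip yR x δ hδ0.le hy'
        rw [hxp, sub_zero] at this
        nlinarith [hδ0.le]
      have hℓylt : |ℓR yR| ≤ Lz / 2 := by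
        have h1 : δ ≤ Lz / (2 * C) := le_trans (min_le_right _ _) (min_le_left _ _)
        have h2 : C * δ ≤ C * (Lz / (2 * C)) := mul_le_mul_of_nonneg_left h1 hC0.le
        have h3 : C * (Lz / (2 * C)) = Lz / 2 := by field_simp
        exact le_trans hℓy (by linarith)
      have hdenR : ℓR yR - ℓR zR ≠ 0 := by
        intro h0
        have : ℓR yR = ℓR zR := by linarith [sub_eq_zero.mp h0]
        rw [this] at hℓylt
        have : Lz ≤ Lz / 2 := by rw [← hLzdef] at hℓylt; linarith
        linarith
      have hdenabs : Lz / 2 ≤ |ℓR yR - ℓR zR| := by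
        have h1 : Lz - |ℓR yR| ≤ |ℓR yR - ℓR zR| := by
          have h2 := abs_sub_abs_le_abs_sub (ℓR zR) (ℓR yR)
          rw [abs_sub_comm (ℓR zR) (ℓR yR)] at h2
          exact le_trans (le_of_eq (by rw [hLzdef])) h2
        linarith
      have hden : ℓQ y - ℓQ z ≠ 0 := by
        intro h0
        apply hdenR
        have : ((ℓQ y - ℓQ z : ℚ) : ℝ) = 0 := by rw [h0]; simp
        push_cast at this
        rw [hcast y, hcast z] at this
        exact this
      set t : ℚ := ℓQ y / (ℓQ y - ℓQ z) with htdef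
      have htcast : (t : ℝ) = ℓR yR / (ℓR yR - ℓR zR) := by
        rw [htdef]; push_cast
        rw [hcast y, hcast z]
      have htabs : |(t : ℝ)| ≤ 2 * C * δ / Lz := by
        rw [htcast, abs_div]
        have h2 : Lz / 2 ≤ |ℓR yR - ℓR zR| := hdenabs
        calc |ℓR yR| / |ℓR yR - ℓR zR| ≤ (C * δ) / (Lz / 2) := by
              apply div_le_div₀ (by positivity) hℓy (by positivity) h2
          _ = 2 * C * δ / Lz := by field_simp
      set w : ι → ℚ := fun i => y i + t * (z i - y i) with hwdef
      have hcomb : ∀ u : ι → ℚ, (∑ i, u i * w i) =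
          (∑ i, u i * y i) + t * ((∑ i, u i * z i) - (∑ i, u i * y i)) := by
        intro u
        have hpt : ∀ i, u i * w i = u i * y i + t * (u i * z i - u i * y i) := by
          intro i; simp only [hwdef]; ring
        calc (∑ i, u i * w i) = ∑ i, (u i * y i + t * (u i * z i - u i * y i)) :=
              Finset.sum_congr rfl fun i _ => hpt i
          _ = (∑ i, u i * y i) + t * ((∑ i, u i * z i) - (∑ i, u i * y i)) := by
              rw [Finset.sum_add_distrib, ← Finset.mul_sum, Finset.sum_sub_distrib]
      refine ⟨w, ?_, ?_⟩
      · intro p hp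
        rcases List.mem_cons.mp hp with h | h
        · subst h
          have h1 : ℓQ w = 0 := by
            have h2 : ℓQ w = ℓQ y + t * (ℓQ z - ℓQ y) := by
              simp only [hℓQ]; rw [hcomb a]; ring
            rw [h2, htdef]
            field_simp
            ring
          simpa [hℓQ, sub_eq_zero] using h1
        · have hy1 := hyE p h
          have hz1 := hzE p h
          rw [hcomb p.1, hy1, hz1]
          ring
      · intro i
        have h1 : |(w i : ℝ) - x i| ≤ |(y i : ℝ) - x i| + |(t : ℝ)| * |(z i : ℝ) - (y i : ℝ)| := by
          have : (w i : ℝ) - x i = ((y i : ℝ) - x i) + (t : ℝ) * ((z i : ℝ) - (y i : ℝ)) := by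
            simp only [hwdef]; push_cast; ring
          rw [this]
          calc |((y i : ℝ) - x i) + (t : ℝ) * ((z i : ℝ) - (y i : ℝ))|
              ≤ |(y i : ℝ) - x i| + |(t : ℝ) * ((z i : ℝ) - (y i : ℝ))| := abs_add_le _ _
            _ = |(y i : ℝ) - x i| + |(t : ℝ)| * |(z i : ℝ) - (y i : ℝ)| := by rw [abs_mul]
        have hzy : |(z i : ℝ) - (y i : ℝ)| ≤ B := by
          have hδ1 : δ ≤ 1 := min_le_left _ _
          have h2 : |(y i : ℝ)| ≤ |x i| + δ := by
            have := hy' i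
            have := abs_sub_abs_le_abs_sub (yR i) (x i)
            simp only [hyR] at *
            linarith [hy' i]
          calc |(z i : ℝ) - (y i : ℝ)| ≤ |(z i : ℝ)| + |(y i : ℝ)| := abs_sub _ _
            _ ≤ |zR i| + (|x i| + δ) := by simp only [hzR]; linarith
            _ ≤ (B - 1) + 1 := by linarith [hBi i]
            _ = B := by ring
        have h3 : |(t : ℝ)| * |(z i : ℝ) - (y i : ℝ)| ≤ (2 * C * δ / Lz) * B := by
          apply mul_le_mul htabs hzy (abs_nonneg _) (by positivity)
        have h4 : δ + (2 * C * δ / Lz) * B ≤ ε / 2 := by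
          have hδ2 : δ ≤ ε / (2 * (1 + 2 * C * B / Lz)) :=
            le_trans (min_le_right _ _) (min_le_right _ _)
          have h5 : δ + (2 * C * δ / Lz) * B = δ * (1 + 2 * C * B / Lz) := by
            field_simp
          rw [h5]
          calc δ * (1 + 2 * C * B / Lz) ≤ (ε / (2 * (1 + 2 * C * B / Lz))) * (1 + 2 * C * B / Lz) :=
                mul_le_mul_of_nonneg_right hδ2 hfac.le
            _ = ε / 2 := by field_simp
        calc |(w i : ℝ) - x i| ≤ |(y i : ℝ) - x i| + |(t : ℝ)| * |(z i : ℝ) - (y i : ℝ)| := h1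
          _ < δ + (2 * C * δ / Lz) * B := add_lt_add_of_lt_of_le (hy i) h3
          _ ≤ ε / 2 := h4
          _ < ε := by linarith
lemma zev_continuous {n m : ℕ} (l : Matrix (Fin m) (Fin n) ℤ × (Fin m → ℤ)) :
    Continuous (zev l) := by
  apply continuous_pi
  intro i
  exact (continuous_finset_sum _ fun j _ => continuous_const.mul (continuous_apply j)).add
    continuous_const

lemma active_pieces {n m : ℕ} {P : Set (Fin n → ℝ)} {η : (Fin n → ℝ) → (Fin m → ℝ)}
    (hc : ContinuousOn η P) {L : List (Matrix (Fin m) (Fin n) ℤ × (Fin m → ℤ))}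
    (hL : ∀ x ∈ P, ∃ l ∈ L, η x = zev l x) {a : Fin n → ℝ} (ha : a ∈ P) :
    ∃ δ > 0, ∀ x ∈ P, dist x a < δ → ∃ l ∈ L, zev l a = η a ∧ η x = zev l x := by
  have gapgen : ∀ L' : List (Matrix (Fin m) (Fin n) ℤ × (Fin m → ℤ)),
      ∃ ρ > 0, ∀ l ∈ L', zev l a ≠ η a → ρ ≤ dist (zev l a) (η a) := by
    intro L'
    induction L' with
    | nil => exact ⟨1, one_pos, by simp⟩
    | cons l L'' ih =>
      obtain ⟨ρ, hρ, hih⟩ := ih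
      by_cases h : zev l a = η a
      · refine ⟨ρ, hρ, fun l' hl' hne => ?_⟩
        rcases List.mem_cons.mp hl' with e | hmem
        · exact absurd (e ▸ h) hne
        · exact hih l' hmem hne
      · refine ⟨min ρ (dist (zev l a) (η a)), lt_min hρ (dist_pos.mpr h), ?_⟩
        intro l' hl' hne
        rcases List.mem_cons.mp hl' with e | hmem
        · subst e; exact min_le_right _ _
        · exact le_trans (min_le_left _ _) (hih l' hmem hne)
  obtain ⟨ρ, hρ, hgap⟩ := gapgen L
  have ucgen : ∀ L' : List (Matrix (Fin m) (Fin n) ℤ × (Fin m → ℤ)),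
      ∃ δ₁ > 0, ∀ l ∈ L', ∀ x : Fin n → ℝ,
      dist x a < δ₁ → dist (zev l x) (zev l a) < ρ / 2 := by
    intro L'
    induction L' with
    | nil => exact ⟨1, one_pos, by simp⟩
    | cons l L'' ih =>
      obtain ⟨δ₁, hδ₁, hih⟩ := ih
      obtain ⟨δ₂, hδ₂, h₂⟩ := Metric.continuous_iff.mp (zev_continuous l) a (ρ / 2) (half_pos hρ)
      refine ⟨min δ₁ δ₂, lt_min hδ₁ hδ₂, ?_⟩
      intro l' hl' x hx
      rcases List.mem_cons.mp hl' with e | hmem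
      · subst e; exact h₂ x (lt_of_lt_of_le hx (min_le_right _ _))
      · exact hih l' hmem x (lt_of_lt_of_le hx (min_le_left _ _))
  obtain ⟨δ₁, hδ₁, huc⟩ := ucgen L
  obtain ⟨δ₀, hδ₀, h₀⟩ := Metric.continuousWithinAt_iff.mp (hc a ha) (ρ / 2) (half_pos hρ)
  refine ⟨min δ₀ δ₁, lt_min hδ₀ hδ₁, ?_⟩
  intro x hx hdx
  obtain ⟨l, hl, hlx⟩ := hL x hx
  refine ⟨l, hl, ?_, hlx⟩
  by_contra hne
  have h1 : ρ ≤ dist (zev l a) (η a) := hgap l hl hne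
  have h2 : dist (zev l x) (zev l a) < ρ / 2 :=
    huc l hl x (lt_of_lt_of_le hdx (min_le_right _ _))
  have h3 : dist (η x) (η a) < ρ / 2 := h₀ hx (lt_of_lt_of_le hdx (min_le_left _ _))
  have h4 : dist (zev l a) (η a) ≤ dist (zev l a) (zev l x) + dist (η x) (η a) := by
    calc dist (zev l a) (η a) ≤ dist (zev l a) (η x) + dist (η x) (η a) := dist_triangle _ _ _
      _ = dist (zev l a) (zev l x) + dist (η x) (η a) := by rw [hlx]
  rw [dist_comm (zev l a) (zev l x)] at h4
  linarith

set_option maxHeartbeats 2000000 in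
lemma monic_inj {n m : ℕ} {P : Set (Fin n → ℝ)} {Q : Set (Fin m → ℝ)}
    (hP : IsRationalPolyhedron P)
    {η : (Fin n → ℝ) → (Fin m → ℝ)} (hη : IsZMapTo P Q η)
    (H : ∀ (k : ℕ) (R : Set (Fin k → ℝ)), IsRationalPolyhedron R →
        ∀ μ₁ μ₂ : (Fin k → ℝ) → (Fin n → ℝ), IsZMapTo R P μ₁ → IsZMapTo R P μ₂ →
          (∀ x ∈ R, η (μ₁ x) = η (μ₂ x)) → ∀ x ∈ R, μ₁ x = μ₂ x) :
    Set.InjOn η P := by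
  classical
  intro a ha b hb hab
  by_contra hne
  obtain ⟨𝒱, h𝒱rat, h𝒱P⟩ := hP
  obtain ⟨⟨hηc, L, hL⟩, hηm⟩ := hη
  have hLz : ∀ x ∈ P, ∃ l ∈ L, η x = zev l x := hL
  -- pieces of the polyhedron containing a and b
  have haU : a ∈ ⋃ V ∈ 𝒱, convexHull ℝ (V : Set (Fin n → ℝ)) := h𝒱P ▸ ha
  have hbU : b ∈ ⋃ V ∈ 𝒱, convexHull ℝ (V : Set (Fin n → ℝ)) := h𝒱P ▸ hb
  obtain ⟨V₁, hV₁, ha1⟩ := Set.mem_iUnion₂.mp haU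
  obtain ⟨V₂, hV₂, hb1⟩ := Set.mem_iUnion₂.mp hbU
  have hV₁rat : ∀ v ∈ V₁, IsRationalPoint v := h𝒱rat V₁ hV₁
  have hV₂rat : ∀ v ∈ V₂, IsRationalPoint v := h𝒱rat V₂ hV₂
  rw [Finset.convexHull_eq] at ha1 hb1
  obtain ⟨w₁, hw₁0, hw₁s, hw₁c⟩ := ha1
  obtain ⟨w₂, hw₂0, hw₂s, hw₂c⟩ := hb1
  have haeq : a = ∑ v ∈ V₁, w₁ v • v := by
    rw [← hw₁c, Finset.centerMass_eq_of_sum_1 _ _ hw₁s]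
    simp
  have hbeq : b = ∑ v ∈ V₂, w₂ v • v := by
    rw [← hw₂c, Finset.centerMass_eq_of_sum_1 _ _ hw₂s]
    simp
  set T₁ := V₁.filter (fun v => 0 < w₁ v) with hT₁def
  set T₂ := V₂.filter (fun v => 0 < w₂ v) with hT₂def
  have hT₁sub : T₁ ⊆ V₁ := Finset.filter_subset _ _
  have hT₂sub : T₂ ⊆ V₂ := Finset.filter_subset _ _
  have hT₁pos : ∀ v ∈ T₁, 0 < w₁ v := fun v hv => (Finset.mem_filter.mp hv).2
  have hT₂pos : ∀ v ∈ T₂, 0 < w₂ v := fun v hv => (Finset.mem_filter.mp hv).2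
  have hfil₁ : ∀ (f : (Fin n → ℝ) → ℝ) (g : (Fin n → ℝ) → (Fin n → ℝ)), True := fun _ _ => trivial
  have hT₁s : ∑ v ∈ T₁, w₁ v = 1 := by
    rw [hT₁def, Finset.sum_filter_of_ne, hw₁s]
    intro v hv hne0
    exact lt_of_le_of_ne (hw₁0 v hv) (Ne.symm hne0)
  have hT₂s : ∑ v ∈ T₂, w₂ v = 1 := by
    rw [hT₂def, Finset.sum_filter_of_ne, hw₂s]
    intro v hv hne0
    exact lt_of_le_of_ne (hw₂0 v hv) (Ne.symm hne0)
  have hT₁a : a = ∑ v ∈ T₁, w₁ v • v := by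
    rw [haeq, hT₁def]
    rw [Finset.sum_filter_of_ne]
    intro v hv hne0
    by_contra hnot
    have hw0 : w₁ v = 0 := le_antisymm (not_lt.mp hnot) (hw₁0 v hv)
    exact hne0 (by rw [hw0, zero_smul])
  have hT₂b : b = ∑ v ∈ T₂, w₂ v • v := by
    rw [hbeq, hT₂def]
    rw [Finset.sum_filter_of_ne]
    intro v hv hne0
    by_contra hnot
    have hw0 : w₂ v = 0 := le_antisymm (not_lt.mp hnot) (hw₂0 v hv)
    exact hne0 (by rw [hw0, zero_smul])
  have hT₁ne : T₁.Nonempty := by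
    rcases Finset.eq_empty_or_nonempty T₁ with h | h
    · rw [h, Finset.sum_empty] at hT₁s; norm_num at hT₁s
    · exact h
  have hT₂ne : T₂.Nonempty := by
    rcases Finset.eq_empty_or_nonempty T₂ with h | h
    · rw [h, Finset.sum_empty] at hT₂s; norm_num at hT₂s
    · exact h
  obtain ⟨v₁m, hv₁m, hv₁min⟩ := T₁.exists_min_image w₁ hT₁ne
  obtain ⟨v₂m, hv₂m, hv₂min⟩ := T₂.exists_min_image w₂ hT₂ne
  set tm : ℝ := min (w₁ v₁m) (w₂ v₂m) with htmdef
  have htm0 : 0 < tm := lt_min (hT₁pos _ hv₁m) (hT₂pos _ hv₂m)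
  -- active pieces near a and b
  obtain ⟨δ₁, hδ₁, hact₁⟩ := active_pieces hηc hLz ha
  obtain ⟨δ₂, hδ₂, hact₂⟩ := active_pieces hηc hLz hb
  obtain ⟨l₀, hl₀L, hl₀a⟩ : ∃ l ∈ L, zev l a = η a := by
    obtain ⟨l, hl, he⟩ := hLz a ha
    exact ⟨l, hl, he.symm⟩
  set La := L.filter (fun l => decide (zev l a = η a)) with hLadef
  set Lb := L.filter (fun l => decide (zev l b = η b)) with hLbdef
  have hLa_mem : ∀ l, l ∈ La ↔ l ∈ L ∧ zev l a = η a := by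
    intro l
    rw [hLadef, List.mem_filter, decide_eq_true_eq]
  have hLb_mem : ∀ l, l ∈ Lb ↔ l ∈ L ∧ zev l b = η b := by
    intro l
    rw [hLbdef, List.mem_filter, decide_eq_true_eq]
  -- rationality of the vertices
  have hratT₁ : ∀ v : {v // v ∈ T₁}, IsRationalPoint (v : Fin n → ℝ) :=
    fun v => hV₁rat ↑v (hT₁sub v.2)
  have hratT₂ : ∀ v : {v // v ∈ T₂}, IsRationalPoint (v : Fin n → ℝ) :=
    fun v => hV₂rat ↑v (hT₂sub v.2)
  -- attach versions
  have hT₁s' : ∑ v ∈ T₁.attach, w₁ ↑v = 1 := by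
    rw [Finset.sum_attach T₁ w₁]; exact hT₁s
  have hT₂s' : ∑ v ∈ T₂.attach, w₂ ↑v = 1 := by
    rw [Finset.sum_attach T₂ w₂]; exact hT₂s
  have hT₁a' : a = ∑ v ∈ T₁.attach, w₁ ↑v • (v : Fin n → ℝ) := by
    rw [Finset.sum_attach T₁ (fun v => w₁ v • v)]; exact hT₁a
  have hT₂b' : b = ∑ v ∈ T₂.attach, w₂ ↑v • (v : Fin n → ℝ) := by
    rw [Finset.sum_attach T₂ (fun v => w₂ v • v)]; exact hT₂b
  have hcombA : ∀ (l : Matrix (Fin m) (Fin n) ℤ × (Fin m → ℤ)) (i : Fin m),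
      zev l a i = ∑ v ∈ T₁.attach, w₁ ↑v * zev l ↑v i := by
    intro l i
    conv_lhs => rw [hT₁a']
    exact zev_comb l T₁.attach _ _ hT₁s' i
  have hcombB : ∀ (l : Matrix (Fin m) (Fin n) ℤ × (Fin m → ℤ)) (i : Fin m),
      zev l b i = ∑ v ∈ T₂.attach, w₂ ↑v * zev l ↑v i := by
    intro l i
    conv_lhs => rw [hT₂b']
    exact zev_comb l T₂.attach _ _ hT₂s' i
  -- the parameter index type and the linear system
  set EA : List (({v // v ∈ T₁} ⊕ {v // v ∈ T₂} → ℚ) × ℚ) := La.flatMap (fun l => (List.finRange m).map (fun i =>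
    (Sum.elim (fun v : {v // v ∈ T₁} => qev l (rc ↑v) i - qev l₀ (rc ↑v) i)
      (fun _ : {v // v ∈ T₂} => 0), 0))) with hEAdef
  set EB : List (({v // v ∈ T₁} ⊕ {v // v ∈ T₂} → ℚ) × ℚ) := Lb.flatMap (fun l => (List.finRange m).map (fun i =>
    (Sum.elim (fun v : {v // v ∈ T₁} => -(qev l₀ (rc ↑v) i))
      (fun w : {v // v ∈ T₂} => qev l (rc ↑w) i), 0))) with hEBdef
  set E : List (({v // v ∈ T₁} ⊕ {v // v ∈ T₂} → ℚ) × ℚ) :=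
    (Sum.elim (fun _ : {v // v ∈ T₁} => (1 : ℚ)) (fun _ : {v // v ∈ T₂} => 0), 1) ::
    (Sum.elim (fun _ : {v // v ∈ T₁} => (0 : ℚ)) (fun _ : {v // v ∈ T₂} => (1 : ℚ)), 1) ::
    (EA ++ EB) with hEdef
  set σ : {v // v ∈ T₁} ⊕ {v // v ∈ T₂} → ℝ :=
    Sum.elim (fun v => w₁ ↑v) (fun v => w₂ ↑v) with hσdef
  have hconv : ∀ (pc : {v // v ∈ T₁} ⊕ {v // v ∈ T₂} → ℚ)
      (τ : {v // v ∈ T₁} ⊕ {v // v ∈ T₂} → ℝ),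
      (∑ i : {v // v ∈ T₁} ⊕ {v // v ∈ T₂}, (pc i : ℝ) * τ i) =
      (∑ v ∈ T₁.attach, (pc (Sum.inl v) : ℝ) * τ (Sum.inl v))
      + (∑ v ∈ T₂.attach, (pc (Sum.inr v) : ℝ) * τ (Sum.inr v)) := by
    intro pc τ
    rw [Fintype.sum_sum_type (f := fun i => (pc i : ℝ) * τ i)]
    rw [Finset.univ_eq_attach, Finset.univ_eq_attach]
  -- σ satisfies the system over ℝ
  have hσE : ∀ p ∈ E, ∑ i, (p.1 i : ℝ) * σ i = (p.2 : ℝ) := by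
    intro p hp
    rcases List.mem_cons.mp hp with h | hp
    · subst h
      rw [hconv]
      simp only [Sum.elim_inl, Sum.elim_inr, hσdef]
      rw [Rat.cast_one]
      push_cast
      simp only [one_mul, zero_mul, Finset.sum_const_zero, add_zero]
      exact hT₁s'
    rcases List.mem_cons.mp hp with h | hp
    · subst h
      rw [hconv]
      simp only [Sum.elim_inl, Sum.elim_inr, hσdef]
      rw [Rat.cast_one]
      push_cast
      simp only [one_mul, zero_mul, Finset.sum_const_zero, zero_add]
      exact hT₂s'
    rcases List.mem_append.mp hp with hp | hp
    · -- family A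
      rw [hEAdef] at hp
      obtain ⟨l, hlLa, hp⟩ := List.mem_flatMap.mp hp
      obtain ⟨i, _, rfl⟩ := List.mem_map.mp hp
      obtain ⟨hlL, hla⟩ := (hLa_mem l).mp hlLa
      rw [hconv]
      simp only [Sum.elim_inl, Sum.elim_inr, hσdef]
      push_cast
      simp only [zero_mul, Finset.sum_const_zero, add_zero]
      have hterm : ∀ v ∈ T₁.attach,
          (((qev l (rc ↑v) i : ℚ) : ℝ) - ((qev l₀ (rc ↑v) i : ℚ) : ℝ)) * w₁ ↑v
          = w₁ ↑v * zev l ↑v i - w₁ ↑v * zev l₀ ↑v i := by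
        intro v _
        rw [← zev_rat_cast l (hratT₁ v) i, ← zev_rat_cast l₀ (hratT₁ v) i]
        ring
      rw [Finset.sum_congr rfl hterm, Finset.sum_sub_distrib,
        ← hcombA l i, ← hcombA l₀ i, hla, hl₀a]
      simp
    · -- family B
      rw [hEBdef] at hp
      obtain ⟨l, hlLb, hp⟩ := List.mem_flatMap.mp hp
      obtain ⟨i, _, rfl⟩ := List.mem_map.mp hp
      obtain ⟨hlL, hlb⟩ := (hLb_mem l).mp hlLb
      rw [hconv]
      simp only [Sum.elim_inl, Sum.elim_inr, hσdef]
      push_cast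
      have hterm1 : ∀ v ∈ T₁.attach,
          (-((qev l₀ (rc ↑v) i : ℚ) : ℝ)) * w₁ ↑v = -(w₁ ↑v * zev l₀ ↑v i) := by
        intro v _
        rw [← zev_rat_cast l₀ (hratT₁ v) i]
        ring
      have hterm2 : ∀ v ∈ T₂.attach,
          ((qev l (rc ↑v) i : ℚ) : ℝ) * w₂ ↑v = w₂ ↑v * zev l ↑v i := by
        intro v _
        rw [← zev_rat_cast l (hratT₂ v) i]
        ring
      rw [Finset.sum_congr rfl hterm1, Finset.sum_congr rfl hterm2,
        Finset.sum_neg_distrib, ← hcombA l₀ i, ← hcombB l i, hl₀a, hlb, hab]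
      simp
  -- choose accuracy
  set B₁ : ℝ := (∑ v ∈ T₁, (∑ j, |v j|)) + 1 with hB₁def
  set B₂ : ℝ := (∑ v ∈ T₂, (∑ j, |v j|)) + 1 with hB₂def
  have hB₁1 : 1 ≤ B₁ := by
    have : (0:ℝ) ≤ ∑ v ∈ T₁, (∑ j, |v j|) :=
      Finset.sum_nonneg fun v _ => Finset.sum_nonneg fun j _ => abs_nonneg _
    rw [hB₁def]; linarith
  have hB₂1 : 1 ≤ B₂ := by
    have : (0:ℝ) ≤ ∑ v ∈ T₂, (∑ j, |v j|) :=
      Finset.sum_nonneg fun v _ => Finset.sum_nonneg fun j _ => abs_nonneg _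
    rw [hB₂def]; linarith
  set ρ : ℝ := min (min δ₁ δ₂) (dist a b / 2) with hρdef
  have hρ0 : 0 < ρ := by
    have hd : 0 < dist a b := dist_pos.mpr hne
    exact lt_min (lt_min hδ₁ hδ₂) (by linarith)
  set ee : ℝ := min tm (ρ / (2 * (B₁ + B₂))) with heedef
  have hee0 : 0 < ee := lt_min htm0 (by positivity)
  obtain ⟨σ', hσ'E, hσ'cl⟩ := ratDense E σ hσE hee0
  -- define the rational points x', y'
  set x' : Fin n → ℝ :=
    ∑ v ∈ T₁.attach, ((σ' (Sum.inl v) : ℚ) : ℝ) • (v : Fin n → ℝ) with hx'def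
  set y' : Fin n → ℝ :=
    ∑ v ∈ T₂.attach, ((σ' (Sum.inr v) : ℚ) : ℝ) • (v : Fin n → ℝ) with hy'def
  -- cast the rational equations to ℝ
  have hσ'ER : ∀ p ∈ E, (∑ v ∈ T₁.attach, (p.1 (Sum.inl v) : ℝ) * ((σ' (Sum.inl v) : ℚ) : ℝ))
      + (∑ v ∈ T₂.attach, (p.1 (Sum.inr v) : ℝ) * ((σ' (Sum.inr v) : ℚ) : ℝ)) = (p.2 : ℝ) := by
    intro p hp
    have h1 := hσ'E p hp
    have h2 := congrArg (fun r : ℚ => (r : ℝ)) h1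
    push_cast at h2
    rw [hconv p.1 (fun i => ((σ' i : ℚ) : ℝ))] at h2
    exact h2
  -- the weights sum to 1
  have he₁ : ∑ v ∈ T₁.attach, ((σ' (Sum.inl v) : ℚ) : ℝ) = 1 := by
    have := hσ'ER _ (List.mem_cons_self)
    simp only [Sum.elim_inl, Sum.elim_inr] at this
    push_cast at this
    simpa using this
  have he₂ : ∑ v ∈ T₂.attach, ((σ' (Sum.inr v) : ℚ) : ℝ) = 1 := by
    have := hσ'ER _ (List.mem_cons_of_mem _ (List.mem_cons_self))
    simp only [Sum.elim_inl, Sum.elim_inr] at this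
    push_cast at this
    simpa using this
  -- closeness of weights
  have hcl₁ : ∀ v : {v // v ∈ T₁}, |((σ' (Sum.inl v) : ℚ) : ℝ) - w₁ ↑v| < ee := by
    intro v
    have := hσ'cl (Sum.inl v)
    simpa [hσdef] using this
  have hcl₂ : ∀ v : {v // v ∈ T₂}, |((σ' (Sum.inr v) : ℚ) : ℝ) - w₂ ↑v| < ee := by
    intro v
    have := hσ'cl (Sum.inr v)
    simpa [hσdef] using this
  -- nonnegativity of the rational weights
  have hpos₁ : ∀ v : {v // v ∈ T₁}, 0 ≤ ((σ' (Sum.inl v) : ℚ) : ℝ) := by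
    intro v
    have h1 := hcl₁ v
    have h2 : tm ≤ w₁ ↑v := le_trans (min_le_left _ _) (hv₁min ↑v v.2)
    have h3 : ee ≤ tm := min_le_left _ _
    have := abs_lt.mp h1
    linarith [this.1]
  have hpos₂ : ∀ v : {v // v ∈ T₂}, 0 ≤ ((σ' (Sum.inr v) : ℚ) : ℝ) := by
    intro v
    have h1 := hcl₂ v
    have h2 : tm ≤ w₂ ↑v := le_trans (min_le_right _ _) (hv₂min ↑v v.2)
    have h3 : ee ≤ tm := min_le_left _ _
    have := abs_lt.mp h1
    linarith [(abs_lt.mp h1).1]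
  -- membership in P
  have hx'P : x' ∈ P := by
    have hhull : x' ∈ convexHull ℝ (V₁ : Set (Fin n → ℝ)) := by
      rw [hx'def, ← Finset.centerMass_eq_of_sum_1 _ _ he₁]
      exact Finset.centerMass_mem_convexHull _ (fun v _ => hpos₁ v) (by rw [he₁]; norm_num)
        (fun v _ => hT₁sub v.2)
    rw [h𝒱P]
    exact Set.mem_biUnion hV₁ hhull
  have hy'P : y' ∈ P := by
    have hhull : y' ∈ convexHull ℝ (V₂ : Set (Fin n → ℝ)) := by
      rw [hy'def, ← Finset.centerMass_eq_of_sum_1 _ _ he₂]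
      exact Finset.centerMass_mem_convexHull _ (fun v _ => hpos₂ v) (by rw [he₂]; norm_num)
        (fun v _ => hT₂sub v.2)
    rw [h𝒱P]
    exact Set.mem_biUnion hV₂ hhull
  -- distance bounds
  have hdista : dist x' a < ρ := by
    rw [dist_pi_lt_iff hρ0]
    intro i
    rw [Real.dist_eq]
    have hx'i : x' i = ∑ v ∈ T₁.attach, ((σ' (Sum.inl v) : ℚ) : ℝ) * (v : Fin n → ℝ) i := by
      rw [hx'def, Finset.sum_apply]
      simp
    have hai : a i = ∑ v ∈ T₁.attach, w₁ ↑v * (v : Fin n → ℝ) i := by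
      conv_lhs => rw [hT₁a']
      rw [Finset.sum_apply]
      simp
    rw [hx'i, hai, ← Finset.sum_sub_distrib]
    have hb1 : |∑ v ∈ T₁.attach, (((σ' (Sum.inl v) : ℚ) : ℝ) * (v : Fin n → ℝ) i
        - w₁ ↑v * (v : Fin n → ℝ) i)|
        ≤ ∑ v ∈ T₁.attach, ee * |(v : Fin n → ℝ) i| := by
      calc |∑ v ∈ T₁.attach, (((σ' (Sum.inl v) : ℚ) : ℝ) * (v : Fin n → ℝ) i
            - w₁ ↑v * (v : Fin n → ℝ) i)|
          ≤ ∑ v ∈ T₁.attach, |((σ' (Sum.inl v) : ℚ) : ℝ) * (v : Fin n → ℝ) i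
            - w₁ ↑v * (v : Fin n → ℝ) i| := Finset.abs_sum_le_sum_abs _ _
        _ ≤ ∑ v ∈ T₁.attach, ee * |(v : Fin n → ℝ) i| := by
            apply Finset.sum_le_sum
            intro v _
            rw [← sub_mul, abs_mul]
            exact mul_le_mul_of_nonneg_right (hcl₁ v).le (abs_nonneg _)
    have hb2 : ∑ v ∈ T₁.attach, ee * |(v : Fin n → ℝ) i| ≤ ee * (B₁ - 1) := by
      rw [← Finset.mul_sum]
      apply mul_le_mul_of_nonneg_left _ hee0.le
      have h1 : ∑ v ∈ T₁.attach, |(v : Fin n → ℝ) i| = ∑ v ∈ T₁, |v i| :=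
        Finset.sum_attach T₁ (fun v => |v i|)
      rw [h1, hB₁def]
      have h2 : ∑ v ∈ T₁, |v i| ≤ ∑ v ∈ T₁, (∑ j, |v j|) := by
        apply Finset.sum_le_sum
        intro v _
        exact Finset.single_le_sum (f := fun j => |v j|) (fun j _ => abs_nonneg _)
          (Finset.mem_univ i)
      linarith
    have hb3 : ee * (B₁ - 1) < ρ := by
      have h1 : ee ≤ ρ / (2 * (B₁ + B₂)) := min_le_right _ _
      have h2 : ee * (B₁ - 1) ≤ (ρ / (2 * (B₁ + B₂))) * (B₁ - 1) :=
        mul_le_mul_of_nonneg_right h1 (by linarith)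
      have h3 : (ρ / (2 * (B₁ + B₂))) * (B₁ - 1) < ρ := by
        rw [div_mul_eq_mul_div, div_lt_iff₀ (by positivity)]
        nlinarith
      exact lt_of_le_of_lt h2 h3
    linarith
  have hdistb : dist y' b < ρ := by
    rw [dist_pi_lt_iff hρ0]
    intro i
    rw [Real.dist_eq]
    have hy'i : y' i = ∑ v ∈ T₂.attach, ((σ' (Sum.inr v) : ℚ) : ℝ) * (v : Fin n → ℝ) i := by
      rw [hy'def, Finset.sum_apply]
      simp
    have hbi : b i = ∑ v ∈ T₂.attach, w₂ ↑v * (v : Fin n → ℝ) i := by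
      conv_lhs => rw [hT₂b']
      rw [Finset.sum_apply]
      simp
    rw [hy'i, hbi, ← Finset.sum_sub_distrib]
    have hb1 : |∑ v ∈ T₂.attach, (((σ' (Sum.inr v) : ℚ) : ℝ) * (v : Fin n → ℝ) i
        - w₂ ↑v * (v : Fin n → ℝ) i)|
        ≤ ∑ v ∈ T₂.attach, ee * |(v : Fin n → ℝ) i| := by
      calc |∑ v ∈ T₂.attach, (((σ' (Sum.inr v) : ℚ) : ℝ) * (v : Fin n → ℝ) i
            - w₂ ↑v * (v : Fin n → ℝ) i)|
          ≤ ∑ v ∈ T₂.attach, |((σ' (Sum.inr v) : ℚ) : ℝ) * (v : Fin n → ℝ) i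
            - w₂ ↑v * (v : Fin n → ℝ) i| := Finset.abs_sum_le_sum_abs _ _
        _ ≤ ∑ v ∈ T₂.attach, ee * |(v : Fin n → ℝ) i| := by
            apply Finset.sum_le_sum
            intro v _
            rw [← sub_mul, abs_mul]
            exact mul_le_mul_of_nonneg_right (hcl₂ v).le (abs_nonneg _)
    have hb2 : ∑ v ∈ T₂.attach, ee * |(v : Fin n → ℝ) i| ≤ ee * (B₂ - 1) := by
      rw [← Finset.mul_sum]
      apply mul_le_mul_of_nonneg_left _ hee0.le
      have h1 : ∑ v ∈ T₂.attach, |(v : Fin n → ℝ) i| = ∑ v ∈ T₂, |v i| :=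
        Finset.sum_attach T₂ (fun v => |v i|)
      rw [h1, hB₂def]
      have h2 : ∑ v ∈ T₂, |v i| ≤ ∑ v ∈ T₂, (∑ j, |v j|) := by
        apply Finset.sum_le_sum
        intro v _
        exact Finset.single_le_sum (f := fun j => |v j|) (fun j _ => abs_nonneg _)
          (Finset.mem_univ i)
      linarith
    have hb3 : ee * (B₂ - 1) < ρ := by
      have h1 : ee ≤ ρ / (2 * (B₁ + B₂)) := min_le_right _ _
      have h2 : ee * (B₂ - 1) ≤ (ρ / (2 * (B₁ + B₂))) * (B₂ - 1) :=
        mul_le_mul_of_nonneg_right h1 (by linarith)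
      have h3 : (ρ / (2 * (B₁ + B₂))) * (B₂ - 1) < ρ := by
        rw [div_mul_eq_mul_div, div_lt_iff₀ (by positivity)]
        nlinarith
      exact lt_of_le_of_lt h2 h3
    linarith
  -- x' ≠ y'
  have hx'y'ne : x' ≠ y' := by
    intro heq
    have h1 : dist a b ≤ dist a x' + dist x' b := dist_triangle _ _ _
    have h2 : dist a x' = dist x' a := dist_comm _ _
    have h3 : dist x' b = dist y' b := by rw [heq]
    have h4 : ρ ≤ dist a b / 2 := min_le_right _ _
    linarith
  -- rationality of x', y'
  have hx'rat : IsRationalPoint x' := by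
    intro i
    refine ⟨∑ v ∈ T₁.attach, σ' (Sum.inl v) * rc (↑v) i, ?_⟩
    rw [hx'def, Finset.sum_apply]
    push_cast
    apply Finset.sum_congr rfl
    intro v _
    simp only [Pi.smul_apply, smul_eq_mul]
    rw [rc_spec (hratT₁ v) i]
  have hy'rat : IsRationalPoint y' := by
    intro i
    refine ⟨∑ v ∈ T₂.attach, σ' (Sum.inr v) * rc (↑v) i, ?_⟩
    rw [hy'def, Finset.sum_apply]
    push_cast
    apply Finset.sum_congr rfl
    intro v _
    simp only [Pi.smul_apply, smul_eq_mul]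
    rw [rc_spec (hratT₂ v) i]
  -- η x' = η y'
  have hρδ₁ : ρ ≤ δ₁ := le_trans (min_le_left _ _) (min_le_left _ _)
  have hρδ₂ : ρ ≤ δ₂ := le_trans (min_le_left _ _) (min_le_right _ _)
  obtain ⟨l, hlL, hla, hlx⟩ := hact₁ x' hx'P (lt_of_lt_of_le hdista hρδ₁)
  obtain ⟨l', hl'L, hl'b, hl'y⟩ := hact₂ y' hy'P (lt_of_lt_of_le hdistb hρδ₂)
  have hcombx : ∀ i, zev l x' i = ∑ v ∈ T₁.attach, ((σ' (Sum.inl v) : ℚ) : ℝ) * zev l ↑v i := by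
    intro i
    conv_lhs => rw [hx'def]
    exact zev_comb l T₁.attach _ _ he₁ i
  have hcombx₀ : ∀ i, zev l₀ x' i
      = ∑ v ∈ T₁.attach, ((σ' (Sum.inl v) : ℚ) : ℝ) * zev l₀ ↑v i := by
    intro i
    conv_lhs => rw [hx'def]
    exact zev_comb l₀ T₁.attach _ _ he₁ i
  have hcomby : ∀ i, zev l' y' i
      = ∑ v ∈ T₂.attach, ((σ' (Sum.inr v) : ℚ) : ℝ) * zev l' ↑v i := by
    intro i
    conv_lhs => rw [hy'def]
    exact zev_comb l' T₂.attach _ _ he₂ i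
  have hηeq : η x' = η y' := by
    funext i
    -- equation from family A for (l, i)
    have hpA : (Sum.elim (fun v : {v // v ∈ T₁} => qev l (rc ↑v) i - qev l₀ (rc ↑v) i)
        (fun _ : {v // v ∈ T₂} => (0:ℚ)), (0:ℚ)) ∈ E := by
      rw [hEdef]
      apply List.mem_cons_of_mem
      apply List.mem_cons_of_mem
      apply List.mem_append_left
      rw [hEAdef]
      apply List.mem_flatMap.mpr
      refine ⟨l, (hLa_mem l).mpr ⟨hlL, hla⟩, ?_⟩
      exact List.mem_map.mpr ⟨i, List.mem_finRange i, rfl⟩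
    have hpB : (Sum.elim (fun v : {v // v ∈ T₁} => -(qev l₀ (rc ↑v) i))
        (fun w : {v // v ∈ T₂} => qev l' (rc ↑w) i), (0:ℚ)) ∈ E := by
      rw [hEdef]
      apply List.mem_cons_of_mem
      apply List.mem_cons_of_mem
      apply List.mem_append_right
      rw [hEBdef]
      apply List.mem_flatMap.mpr
      refine ⟨l', (hLb_mem l').mpr ⟨hl'L, hl'b⟩, ?_⟩
      exact List.mem_map.mpr ⟨i, List.mem_finRange i, rfl⟩
    have hA := hσ'ER _ hpA
    have hB := hσ'ER _ hpB
    simp only [Sum.elim_inl, Sum.elim_inr, Rat.cast_zero, Rat.cast_sub, Rat.cast_neg,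
      zero_mul, Finset.sum_const_zero, add_zero] at hA hB
    have hA2 : (∑ v ∈ T₁.attach, (((σ' (Sum.inl v) : ℚ) : ℝ) * zev l ↑v i
        - ((σ' (Sum.inl v) : ℚ) : ℝ) * zev l₀ ↑v i)) = 0 := by
      refine Eq.trans (Finset.sum_congr rfl ?_) hA
      intro v _
      rw [zev_rat_cast l (hratT₁ v) i, zev_rat_cast l₀ (hratT₁ v) i]
      ring
    have hB2 : (∑ v ∈ T₁.attach, (-(((σ' (Sum.inl v) : ℚ) : ℝ) * zev l₀ ↑v i)))
        + (∑ v ∈ T₂.attach, ((σ' (Sum.inr v) : ℚ) : ℝ) * zev l' ↑v i) = 0 := by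
      refine Eq.trans ?_ hB
      congr 1
      · apply Finset.sum_congr rfl
        intro v _
        rw [zev_rat_cast l₀ (hratT₁ v) i]
        ring
      · apply Finset.sum_congr rfl
        intro v _
        rw [zev_rat_cast l' (hratT₂ v) i]
        ring
    rw [Finset.sum_sub_distrib] at hA2
    rw [Finset.sum_neg_distrib] at hB2
    rw [congrFun hlx i, congrFun hl'y i, hcombx i, hcomby i]
    have hx₀ := hcombx₀ i
    linarith [hA2, hB2]
  -- conclude via the rational-witness lemma
  exact hx'y'ne (rational_witness H hx'P hy'P hx'rat hy'rat hηeq)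
lemma ratpoly_compact {n : ℕ} {P : Set (Fin n → ℝ)} (hP : IsRationalPolyhedron P) :
    IsCompact P := by
  obtain ⟨𝒱, -, h2⟩ := hP
  rw [h2]
  apply 𝒱.finite_toSet.isCompact_biUnion
  intro V _
  exact V.finite_toSet.isCompact_convexHull ℝ

lemma epic_surj {n m : ℕ} {P : Set (Fin n → ℝ)} {Q : Set (Fin m → ℝ)}
    (hP : IsRationalPolyhedron P)
    {η : (Fin n → ℝ) → (Fin m → ℝ)} (hη : IsZMapTo P Q η)
    (H : ∀ (k : ℕ) (R : Set (Fin k → ℝ)), IsRationalPolyhedron R →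
        ∀ μ₁ μ₂ : (Fin m → ℝ) → (Fin k → ℝ), IsZMapTo Q R μ₁ → IsZMapTo Q R μ₂ →
          (∀ x ∈ P, μ₁ (η x) = μ₂ (η x)) → ∀ y ∈ Q, μ₁ y = μ₂ y) :
    Set.SurjOn η P Q := by
  classical
  by_contra hns
  obtain ⟨q, hqQ, hqC⟩ := Set.not_subset.mp hns
  set C : Set (Fin m → ℝ) := η '' P with hCdef
  have hCcomp : IsCompact C := (ratpoly_compact hP).image_of_continuousOn hη.1.1
  obtain ⟨ε, hε, hball⟩ := Metric.isOpen_iff.mp hCcomp.isClosed.isOpen_compl q hqC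
  have hCdist : ∀ y ∈ C, ε ≤ dist y q := by
    intro y hy
    by_contra hlt
    exact hball (Metric.mem_ball.mpr (lt_of_not_ge hlt)) hy
  -- choose a large denominator D
  obtain ⟨d, hd⟩ := exists_nat_ge ((2 * (m : ℝ) + 3) / ε)
  set D : ℕ := d + 1 with hDdef
  have hD : (2 * (m : ℝ) + 3) / ε ≤ (D : ℝ) := by
    have : (d : ℝ) ≤ (D : ℝ) := by exact_mod_cast Nat.le_succ d
    linarith
  have hD0 : (0 : ℝ) < D := by positivity
  set p : Fin m → ℤ := fun i => round ((D : ℝ) * q i) with hpdef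
  set g : (Fin m → ℝ) → ℝ := fun y => ∑ i, |(D : ℝ) * y i - (p i : ℝ)| with hgdef
  set N : ℕ := m + 1 with hNdef
  have hN0 : (0 : ℝ) < N := by positivity
  set f : (Fin m → ℝ) → ℝ := fun y => max 0 ((N : ℝ) - g y) with hfdef
  have hg0 : ∀ y, 0 ≤ g y := fun y => Finset.sum_nonneg fun i _ => abs_nonneg _
  have hf0 : ∀ y, 0 ≤ f y := fun y => le_max_left _ _
  have hfN : ∀ y, f y ≤ N := by
    intro y
    apply max_le hN0.le
    have := hg0 y
    linarith
  -- f vanishes on C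
  have hgC : ∀ y ∈ C, (N : ℝ) ≤ g y := by
    intro y hy
    obtain ⟨i₀, hi₀⟩ : ∃ i₀, ε / 2 < |y i₀ - q i₀| := by
      by_contra hno
      push_neg at hno
      have : dist y q ≤ ε / 2 := by
        rw [dist_pi_le_iff (by positivity)]
        intro i
        rw [Real.dist_eq]
        exact hno i
      linarith [hCdist y hy]
    have h1 : |(D : ℝ) * y i₀ - (p i₀ : ℝ)| ≤ g y := by
      apply Finset.single_le_sum (f := fun i => |(D : ℝ) * y i - (p i : ℝ)|)
        (fun i _ => abs_nonneg _) (Finset.mem_univ i₀)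
    set a : ℝ := (D : ℝ) * y i₀ - (D : ℝ) * q i₀ with hadef
    set b : ℝ := (D : ℝ) * q i₀ - (p i₀ : ℝ) with hbdef
    have h2 : |a| - |b| ≤ |(D : ℝ) * y i₀ - (p i₀ : ℝ)| := by
      have h3 := abs_sub_abs_le_abs_sub a (-b)
      have h4 : a - (-b) = (D : ℝ) * y i₀ - (p i₀ : ℝ) := by rw [hadef, hbdef]; ring
      rw [h4, abs_neg] at h3
      exact h3
    have h5 : |a| = (D : ℝ) * |y i₀ - q i₀| := by
      rw [hadef, ← mul_sub, abs_mul, abs_of_pos hD0]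
    have h6 : |b| ≤ 1 / 2 := by
      rw [hbdef, hpdef]
      exact abs_sub_round ((D : ℝ) * q i₀)
    have h7 : 2 * (m : ℝ) + 3 ≤ (D : ℝ) * ε := (div_le_iff₀ hε).mp hD
    have h8 : (D : ℝ) * (ε / 2) ≤ (D : ℝ) * |y i₀ - q i₀| :=
      mul_le_mul_of_nonneg_left hi₀.le hD0.le
    have : (N : ℝ) = (m : ℝ) + 1 := by rw [hNdef]; push_cast; ring
    rw [this]
    nlinarith [h1, h2, h5, h6, h7, h8]
  have hfC : ∀ y ∈ C, f y = 0 := by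
    intro y hy
    rw [hfdef]
    simp only
    apply max_eq_left
    linarith [hgC y hy]
  have hgq : g q ≤ (m : ℝ) / 2 := by
    rw [hgdef]
    calc (∑ i, |(D : ℝ) * q i - (p i : ℝ)|) ≤ ∑ _i : Fin m, (1 : ℝ) / 2 := by
          apply Finset.sum_le_sum
          intro i _
          rw [hpdef]
          exact abs_sub_round ((D : ℝ) * q i)
      _ = (m : ℝ) / 2 := by simp; ring
  have hfq : 0 < f q := by
    rw [hfdef]
    simp only
    apply lt_max_of_lt_right
    have : (N : ℝ) = (m : ℝ) + 1 := by rw [hNdef]; push_cast; ring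
    rw [this]
    linarith
  -- The comparison polyhedron R = [0, N] in ℝ¹
  set v0 : Fin 1 → ℝ := fun _ => 0 with hv0
  set vN : Fin 1 → ℝ := fun _ => (N : ℝ) with hvN
  set R : Set (Fin 1 → ℝ) := convexHull ℝ {v0, vN} with hRdef
  have hR : IsRationalPolyhedron R := by
    refine ⟨{({v0, vN} : Finset (Fin 1 → ℝ))}, ?_, ?_⟩
    · intro V hV v hv
      rw [Finset.mem_singleton] at hV
      subst hV
      rcases Finset.mem_insert.mp hv with h | h
      · subst h; intro i; exact ⟨0, by rw [hv0]; simp⟩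
      · rw [Finset.mem_singleton] at h; subst h
        intro i; exact ⟨(N : ℚ), by rw [hvN]; simp⟩
    · rw [hRdef]
      rw [Finset.set_biUnion_singleton]
      simp
  set μ₁ : (Fin m → ℝ) → (Fin 1 → ℝ) := fun y => fun _ => f y with hμ₁def
  set μ₂ : (Fin m → ℝ) → (Fin 1 → ℝ) := fun _ => fun _ => 0 with hμ₂def
  have hgcont : Continuous g := by
    apply continuous_finset_sum
    intro i _
    exact ((continuous_const.mul (continuous_apply i)).sub continuous_const).abs
  have hfcont : Continuous f := continuous_const.max (continuous_const.sub hgcont)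
  have hμ₁cont : Continuous μ₁ := continuous_pi fun _ => hfcont
  set Ms : (Fin m → Bool) → Matrix (Fin 1) (Fin m) ℤ :=
    fun s => fun _ j => if s j then (D : ℤ) else -(D : ℤ) with hMs
  set bs : (Fin m → Bool) → (Fin 1 → ℤ) :=
    fun s => fun _ => (N : ℤ) + ∑ j, (if s j then -(p j) else p j) with hbs
  set L₁ : List (Matrix (Fin 1) (Fin m) ℤ × (Fin 1 → ℤ)) :=
    (0, 0) :: ((Finset.univ : Finset (Fin m → Bool)).toList.map fun s => (Ms s, bs s)) with hL₁
  have hμ₁Z : IsZMapTo Q R μ₁ := by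
    refine ⟨⟨hμ₁cont.continuousOn, L₁, ?_⟩, ?_⟩
    · intro y hy
      by_cases hcase : (N : ℝ) - g y ≤ 0
      · refine ⟨(0, 0), List.mem_cons_self, ?_⟩
        funext i
        simp only [hμ₁def, hfdef]
        rw [max_eq_left hcase]
        simp
      · set s : Fin m → Bool := fun j => if (D : ℝ) * y j - (p j : ℝ) < 0 then true else false
          with hs
        refine ⟨(Ms s, bs s), List.mem_cons_of_mem _ ?_, ?_⟩
        · exact List.mem_map_of_mem (Finset.mem_toList.mpr (Finset.mem_univ s))
        · funext i
          have hmax : f y = (N : ℝ) - g y :=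
            max_eq_right (le_of_lt (lt_of_not_ge hcase))
          have hpt : ∀ j, ((if s j then (D : ℤ) else -(D : ℤ) : ℤ) : ℝ) * y j
              + ((if s j then -(p j) else p j : ℤ) : ℝ) = -|(D : ℝ) * y j - (p j : ℝ)| := by
            intro j
            rw [hs]
            by_cases hj : (D : ℝ) * y j - (p j : ℝ) < 0
            · simp only [if_pos hj, if_true]
              rw [abs_of_neg hj]
              push_cast
              ring
            · simp only [if_neg hj, if_false]
              rw [abs_of_nonneg (le_of_not_gt hj)]
              push_cast
              ring
          show f y = (∑ j, ((Ms s) i j : ℝ) * y j) + ((bs s) i : ℝ)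
          rw [hmax, hMs, hbs]
          simp only [Int.cast_add, Int.cast_sum, Int.cast_natCast]
          have hkey : (∑ j, (((if s j then (D:ℤ) else -(D:ℤ)) : ℤ) : ℝ) * y j)
              + (∑ j, (((if s j then -(p j) else p j) : ℤ) : ℝ)) = - g y := by
            rw [hgdef, ← Finset.sum_add_distrib]
            simp only
            rw [← Finset.sum_neg_distrib]
            exact Finset.sum_congr rfl fun j _ => hpt j
          linarith [hkey]
    · intro y hy
      rw [hRdef, convexHull_pair]
      refine ⟨1 - f y / N, f y / N, ?_, ?_, ?_, ?_⟩
      · have h1 : f y / N ≤ 1 := (div_le_one hN0).mpr (hfN y)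
        linarith
      · exact div_nonneg (hf0 y) hN0.le
      · ring
      · funext i
        rw [hv0, hvN]
        simp only [Pi.add_apply, Pi.smul_apply, smul_eq_mul, hμ₁def]
        field_simp
        ring
  have hμ₂Z : IsZMapTo Q R μ₂ := by
    refine ⟨⟨continuous_const.continuousOn, [(0, 0)], ?_⟩, ?_⟩
    · intro y hy
      refine ⟨(0, 0), List.mem_singleton_self _, ?_⟩
      funext i
      simp [hμ₂def]
    · intro y hy
      rw [hRdef]
      exact subset_convexHull ℝ _ (Set.mem_insert _ _)
  have hpre : ∀ x ∈ P, μ₁ (η x) = μ₂ (η x) := by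
    intro x hx
    funext i
    simp only [hμ₁def, hμ₂def]
    exact hfC (η x) ⟨x, hx, rfl⟩
  have hfinal := congrFun (H 1 R hR μ₁ μ₂ hμ₁Z hμ₂Z hpre q hqQ) 0
  simp only [hμ₁def, hμ₂def] at hfinal
  linarith

/-- Theorem (monic/epic): a Z-map `η : P → Q` is monic in the category of rational polyhedra
iff it is injective, and epic iff it is onto `Q`. -/
theorem statement9 {n m : ℕ} {P : Set (Fin n → ℝ)} {Q : Set (Fin m → ℝ)}
    (hP : IsRationalPolyhedron P) (hQ : IsRationalPolyhedron Q)
    {η : (Fin n → ℝ) → (Fin m → ℝ)} (hη : IsZMapTo P Q η) :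
    (Set.InjOn η P ↔
      ∀ (k : ℕ) (R : Set (Fin k → ℝ)), IsRationalPolyhedron R →
        ∀ μ₁ μ₂ : (Fin k → ℝ) → (Fin n → ℝ), IsZMapTo R P μ₁ → IsZMapTo R P μ₂ →
          (∀ x ∈ R, η (μ₁ x) = η (μ₂ x)) → ∀ x ∈ R, μ₁ x = μ₂ x) ∧
    (Set.SurjOn η P Q ↔
      ∀ (k : ℕ) (R : Set (Fin k → ℝ)), IsRationalPolyhedron R →
        ∀ μ₁ μ₂ : (Fin m → ℝ) → (Fin k → ℝ), IsZMapTo Q R μ₁ → IsZMapTo Q R μ₂ →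
          (∀ x ∈ P, μ₁ (η x) = μ₂ (η x)) → ∀ y ∈ Q, μ₁ y = μ₂ y) := by
  
  constructor
  · constructor
    · intro hinj k R hR μ₁ μ₂ h1 h2 heq x hx
      exact hinj (h1.2 hx) (h2.2 hx) (heq x hx)
    · intro H
      exact monic_inj hP hη H
  · constructor
    · intro hsurj k R hR μ₁ μ₂ h1 h2 heq y hy
      obtain ⟨x, hx, hxy⟩ := hsurj hy
      rw [← hxy]
      exact heq x hx
    · intro H
      exact epic_surj hP hη H
end

section
/- Let S ⊆ ℝ^n be a regular k-simplex and T ⊆ S a regular k-simplex contained in S (same dimension k). Then the greatest common divisor of the denominators of the vertices of T equals the greatest common divisor of the denominators of the vertices of S. -/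
open scoped BigOperators

section Aux

open Finset

/-- For a rational point, `den x` is a positive common denominator. -/
lemma den_mem {n : ℕ} {x : Fin n → ℝ} (hx : IsRationalPoint x) :
    0 < den x ∧ ∀ i, ∃ z : ℤ, (den x : ℝ) * x i = (z : ℝ) := by
  have hne : {d : ℕ | 0 < d ∧ ∀ i, ∃ z : ℤ, (d : ℝ) * x i = (z : ℝ)}.Nonempty := by
    classical
    choose q hq using hx
    refine ⟨∏ i, (q i).den, ?_, ?_⟩
    · exact Finset.prod_pos fun i _ => (q i).pos
    · intro i
      obtain ⟨e, he⟩ : (q i).den ∣ ∏ j, (q j).den := Finset.dvd_prod_of_mem _ (mem_univ i)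
      refine ⟨(q i).num * e, ?_⟩
      rw [hq i]
      have hden : ((q i).den : ℚ) * q i = ((q i).num : ℚ) := by
        have hd0 : ((q i).den : ℚ) ≠ 0 := by exact_mod_cast (q i).den_nz
        nth_rewrite 2 [← Rat.num_div_den (q i)]
        field_simp
      have : ((∏ j, (q j).den : ℕ) : ℚ) * q i = (((q i).num * e : ℤ) : ℚ) := by
        rw [he]
        push_cast
        rw [mul_comm ((q i).den : ℚ) (e : ℚ), mul_assoc, hden]
        ring
      exact_mod_cast congrArg (fun r : ℚ => (r : ℝ)) this
  exact Nat.sInf_mem hne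

lemma den_pos {n : ℕ} {x : Fin n → ℝ} (hx : IsRationalPoint x) : 0 < den x := (den_mem hx).1

/-- The homogeneous correspondent of a rational point is an integer vector. -/
lemma exists_int_homCorr {n : ℕ} {x : Fin n → ℝ} (hx : IsRationalPoint x) :
    ∃ W : Fin (n + 1) → ℤ, (fun j => ((W j : ℤ) : ℝ)) = homCorr x := by
  classical
  choose z hz using (den_mem hx).2
  refine ⟨Fin.snoc z (den x : ℤ), funext fun j => ?_⟩
  refine Fin.lastCases ?_ (fun i => ?_) j
  · simp [homCorr, Fin.snoc_last]
  · simp [homCorr, Fin.snoc_castSucc, hz i]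

/-- Casting an integer vector expressed in an integer basis to the reals. -/
lemma cast_eq_sum_repr {m : ℕ} (b : Module.Basis (Fin m) ℤ (Fin m → ℤ)) (u : Fin m → ℤ) :
    (fun i => ((u i : ℤ) : ℝ)) =
      ∑ j, (((b.repr u j : ℤ) : ℝ)) • (fun i => ((b j i : ℤ) : ℝ)) := by
  classical
  conv_lhs => rw [← b.sum_repr u]
  funext i
  simp only [Finset.sum_apply, Pi.smul_apply, smul_eq_mul]
  push_cast
  rfl

/-- The real casts of an integer basis of `ℤ^m` are linearly independent over `ℝ`. -/
lemma cast_basis_linearIndependent {m : ℕ} (b : Module.Basis (Fin m) ℤ (Fin m → ℤ)) :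
    LinearIndependent ℝ (fun j => (fun i => ((b j i : ℤ) : ℝ)) : Fin m → (Fin m → ℝ)) := by
  classical
  apply linearIndependent_of_top_le_span_of_card_eq_finrank
  · -- the casts span
    have hmem : ∀ u : Fin m → ℤ, (fun i => ((u i : ℤ) : ℝ)) ∈
        Submodule.span ℝ (Set.range (fun j => (fun i => ((b j i : ℤ) : ℝ)) : Fin m → (Fin m → ℝ))) := by
      intro u
      rw [cast_eq_sum_repr b u]
      exact Submodule.sum_mem _ fun j _ =>
        Submodule.smul_mem _ _ (Submodule.subset_span ⟨j, rfl⟩)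
    rw [← (Pi.basisFun ℝ (Fin m)).span_eq]
    rw [Submodule.span_le]
    rintro y ⟨i, rfl⟩
    have : ((Pi.basisFun ℝ (Fin m)) i : Fin m → ℝ) = fun k => (((Pi.single i 1 : Fin m → ℤ) k : ℤ) : ℝ) := by
      funext k
      simp [Pi.basisFun_apply, Pi.single_apply, apply_ite (fun z : ℤ => (z : ℝ))]
    rw [this]
    exact hmem _
  · simp

end Aux
section Key

open Finset

/-- Key lemma: if `V` is a regular simplex and `x` is a rational point in the affine span
of `V`, then the gcd of the denominators of `V` divides `den x`. -/
lemma gcd_den_dvd {n : ℕ} {V : Finset (Fin n → ℝ)} (hV : IsRegularSimplex V)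
    {x : Fin n → ℝ} (hx : IsRationalPoint x)
    (hmem : x ∈ affineSpan ℝ (V : Set (Fin n → ℝ))) :
    Finset.gcd V den ∣ den x := by
  classical
  obtain ⟨⟨hrat, _⟩, b, f, hf, hbf⟩ := hV
  set g : Fin (n + 1) → (Fin (n + 1) → ℝ) := fun j => fun i => ((b j i : ℤ) : ℝ) with hg
  have hli : LinearIndependent ℝ g := cast_basis_linearIndependent b
  -- affine combination
  rw [show (V : Set (Fin n → ℝ)) = Set.range (fun v : V => (v : Fin n → ℝ)) from
    (Subtype.range_coe).symm] at hmem
  obtain ⟨w, hw1, hxw⟩ := eq_affineCombination_of_mem_affineSpan_of_fintype hmem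
  have hxsum : x = ∑ v : V, w v • (v : Fin n → ℝ) := by
    rw [hxw, Finset.univ.affineCombination_eq_linear_combination _ _ hw1]
  -- denominators
  have hdenx := den_mem hx
  have hdenv : ∀ v : V, (0:ℝ) < den (v : Fin n → ℝ) := fun v => by
    exact_mod_cast den_pos (hrat v v.2)
  -- the coefficients
  set μ : V → ℝ := fun v => (den x : ℝ) * w v / (den (v : Fin n → ℝ) : ℝ) with hμ
  -- homCorr x as a combination of the homCorr of vertices
  have hcomb : homCorr x = ∑ v : V, μ v • homCorr (v : Fin n → ℝ) := by
    funext j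
    rw [Finset.sum_apply]
    refine Fin.lastCases ?_ (fun i => ?_) j
    · simp only [homCorr, Fin.snoc_last, Pi.smul_apply, smul_eq_mul, hμ]
      have : ∀ v : V, (den x : ℝ) * w v / (den (v : Fin n → ℝ) : ℝ) * (den (v : Fin n → ℝ) : ℝ)
          = (den x : ℝ) * w v := fun v => div_mul_cancel₀ _ (ne_of_gt (hdenv v))
      rw [Finset.sum_congr rfl fun v _ => this v, ← Finset.mul_sum, hw1, mul_one]
    · simp only [homCorr, Fin.snoc_castSucc, Pi.smul_apply, smul_eq_mul, hμ]
      have : ∀ v : V, (den x : ℝ) * w v / (den (v : Fin n → ℝ) : ℝ) *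
          ((den (v : Fin n → ℝ) : ℝ) * (v : Fin n → ℝ) i)
          = (den x : ℝ) * (w v * (v : Fin n → ℝ) i) := fun v => by
        have hd := ne_of_gt (hdenv v)
        field_simp
      rw [Finset.sum_congr rfl fun v _ => this v, ← Finset.mul_sum]
      congr 1
      rw [hxsum, Finset.sum_apply]
      simp
  -- the integer vector
  obtain ⟨W, hW⟩ := exists_int_homCorr hx
  -- two representations
  have hrep1 : (fun i => ((W i : ℤ) : ℝ)) = ∑ j, (((b.repr W j : ℤ) : ℝ)) • g j :=
    cast_eq_sum_repr b W
  have hrep2 : (fun i => ((W i : ℤ) : ℝ)) = ∑ v : V, μ v • g (f v) := by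
    rw [hW, hcomb]
    exact Finset.sum_congr rfl fun v _ => by rw [← hbf v]
  -- fiberwise
  set β : Fin (n + 1) → ℝ := fun j => ∑ v ∈ Finset.univ.filter (fun v : V => f v = j), μ v with hβ
  have hrep3 : ∑ v : V, μ v • g (f v) = ∑ j, β j • g j := by
    rw [eq_comm]
    calc ∑ j, β j • g j
        = ∑ j, ∑ v ∈ Finset.univ.filter (fun v : V => f v = j), μ v • g (f v) := by
          refine Finset.sum_congr rfl fun j _ => ?_
          rw [hβ, Finset.sum_smul]
          exact Finset.sum_congr rfl fun v hv => by rw [(Finset.mem_filter.mp hv).2]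
      _ = ∑ v : V, μ v • g (f v) :=
          Finset.sum_fiberwise_of_maps_to (fun v _ => Finset.mem_univ (f v)) _
  -- linear independence gives equality of coefficients
  have hcoef : ∀ j, ((b.repr W j : ℤ) : ℝ) = β j := by
    have h0 : ∑ j, (((b.repr W j : ℤ) : ℝ) - β j) • g j = 0 := by
      simp only [sub_smul, Finset.sum_sub_distrib]
      rw [← hrep1, hrep2, hrep3, sub_self]
    have := Fintype.linearIndependent_iff.mp hli _ h0
    intro j
    have hj := this j
    linarith [hj]
  -- coefficient at f v equals μ v
  have hμint : ∀ v : V, μ v = ((b.repr W (f v) : ℤ) : ℝ) := by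
    intro v
    rw [hcoef (f v)]
    have hfil : Finset.univ.filter (fun u : V => f u = f v) = {v} := by
      ext u
      simp [hf.eq_iff]
    have hβv : β (f v) = ∑ u ∈ Finset.univ.filter (fun u : V => f u = f v), μ u := rfl
    rw [hβv, hfil, Finset.sum_singleton]
  -- read off the last coordinate
  have hlast : (den x : ℝ) = ∑ v : V, ((b.repr W (f v) : ℤ) : ℝ) * (den (v : Fin n → ℝ) : ℝ) := by
    have := congrFun hcomb (Fin.last n)
    simp only [homCorr, Fin.snoc_last, Finset.sum_apply, Pi.smul_apply, smul_eq_mul] at this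
    rw [this]
    exact Finset.sum_congr rfl fun v _ => by rw [hμint v]
  have hint : (den x : ℤ) = ∑ v : V, (b.repr W (f v)) * (den (v : Fin n → ℝ) : ℤ) := by
    exact_mod_cast hlast
  have hdvd : ((Finset.gcd V den : ℕ) : ℤ) ∣ (den x : ℤ) := by
    rw [hint]
    exact Finset.dvd_sum fun v _ => Dvd.dvd.mul_left
      (Int.natCast_dvd_natCast.mpr (Finset.gcd_dvd v.2)) _
  exact_mod_cast hdvd

end Key
/-- Lemma (subdiv preserves den): if `T ⊆ S` are regular `k`-simplexes of the same dimension,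
then the gcd of the denominators of the vertices of `T` equals that of `S`. -/
theorem statement15 {n k : ℕ} (S T : Finset (Fin n → ℝ))
    (hS : IsRegularSimplex S) (hT : IsRegularSimplex T)
    (hScard : S.card = k + 1) (hTcard : T.card = k + 1)
    (hsub : convexHull ℝ (T : Set (Fin n → ℝ)) ⊆ convexHull ℝ (S : Set (Fin n → ℝ))) :
    Finset.gcd T den = Finset.gcd S den := by
  classical
  have hTS : (T : Set (Fin n → ℝ)) ⊆ convexHull ℝ (S : Set (Fin n → ℝ)) :=
    fun t ht => hsub (subset_convexHull ℝ _ ht)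
  have hTaff : (T : Set (Fin n → ℝ)) ⊆ (affineSpan ℝ (S : Set (Fin n → ℝ)) : Set _) :=
    fun t ht => convexHull_subset_affineSpan _ (hTS ht)
  -- gcd S ∣ gcd T
  have h1 : Finset.gcd S den ∣ Finset.gcd T den :=
    Finset.dvd_gcd fun t ht => gcd_den_dvd hS (hT.1.1 t ht) (hTaff ht)
  -- affine spans coincide
  have hle : affineSpan ℝ (T : Set (Fin n → ℝ)) ≤ affineSpan ℝ (S : Set (Fin n → ℝ)) := by
    rw [affineSpan_le]
    exact hTaff
  have hfinS : Module.finrank ℝ (vectorSpan ℝ (S : Set (Fin n → ℝ))) = k := by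
    have h' : Set.range (fun v : S => (v : Fin n → ℝ)) = (S : Set (Fin n → ℝ)) :=
      Subtype.range_coe
    have := hS.1.2.finrank_vectorSpan (n := k)
      (by rw [Fintype.card_coe]; exact hScard)
    rwa [h'] at this
  have hfinT : Module.finrank ℝ (vectorSpan ℝ (T : Set (Fin n → ℝ))) = k := by
    have h' : Set.range (fun v : T => (v : Fin n → ℝ)) = (T : Set (Fin n → ℝ)) :=
      Subtype.range_coe
    have := hT.1.2.finrank_vectorSpan (n := k)
      (by rw [Fintype.card_coe]; exact hTcard)
    rwa [h'] at this
  have hdir : (affineSpan ℝ (T : Set (Fin n → ℝ))).direction =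
      (affineSpan ℝ (S : Set (Fin n → ℝ))).direction := by
    apply Submodule.eq_of_le_of_finrank_eq (AffineSubspace.direction_le hle)
    rw [direction_affineSpan, direction_affineSpan, hfinS, hfinT]
  have hTne : (T : Set (Fin n → ℝ)).Nonempty := by
    rw [Finset.coe_nonempty, ← Finset.card_pos, hTcard]
    omega
  obtain ⟨t0, ht0⟩ := hTne
  have heq : affineSpan ℝ (T : Set (Fin n → ℝ)) = affineSpan ℝ (S : Set (Fin n → ℝ)) := by
    apply AffineSubspace.ext_of_direction_eq hdir
    exact ⟨t0, mem_affineSpan ℝ ht0, hle (mem_affineSpan ℝ ht0)⟩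
  have h2 : Finset.gcd T den ∣ Finset.gcd S den := by
    refine Finset.dvd_gcd fun s hs => gcd_den_dvd hT (hS.1.1 s hs) ?_
    rw [heq]
    exact mem_affineSpan ℝ hs
  exact Nat.dvd_antisymm h2 h1
end
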